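/- arXiv:2310.01347 — 2 statements merged into one kernel-verified Lean document; each statement's English description precedes it below -/
import Mathlib

section
/- Let G ≤ P_n be a stabilizer group (an abelian subgroup of the n-qubit Pauli group with −I ∉ G) and let A_1, …, A_p be pairwise disjoint subsets of [n] whose union is [n]. Then log₂|G| ≤ Σ_{i=1}^p c(ρ_{A_i}(G)), where for a subgroup M ≤ P̂_n, c(M) denotes the maximum of log₂|K| over all commuting subgroups K ≤ M. -/
open Matrix

noncomputable section

/-- The space of `n`-qubit operators (2^n × 2^n complex matrices, indexed by bit strings). -/
abbrev QMat (n : ℕ) := Matrix (Fin n → Fin 2) (Fin n → Fin 2) ℂ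

/-- The space of `n`-qubit state vectors (ℂ^{2^n}, indexed by bit strings). -/
abbrev QVec (n : ℕ) := (Fin n → Fin 2) → ℂ

def PauliX : Matrix (Fin 2) (Fin 2) ℂ := !![0, 1; 1, 0]
def PauliY : Matrix (Fin 2) (Fin 2) ℂ := !![0, -Complex.I; Complex.I, 0]
def PauliZ : Matrix (Fin 2) (Fin 2) ℂ := !![1, 0; 0, -1]

/-- `Q` is one of the four single-qubit Pauli matrices `I, X, Y, Z`. -/
def IsSingleQubitPauli (Q : Matrix (Fin 2) (Fin 2) ℂ) : Prop :=
  Q = 1 ∨ Q = PauliX ∨ Q = PauliY ∨ Q = PauliZ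

/-- Kronecker product, in qubit order, of `n` single-qubit operators. -/
def tensorn (n : ℕ) (Q : Fin n → Matrix (Fin 2) (Fin 2) ℂ) : QMat n :=
  fun x y => ∏ j, Q j (x j) (y j)

/-- `P` is an element of the `n`-qubit Pauli group: `P = i^ℓ · Q_1 ⊗ ⋯ ⊗ Q_n`. -/
def IsPauli {n : ℕ} (P : QMat n) : Prop :=
  ∃ (ℓ : Fin 4) (Q : Fin n → Matrix (Fin 2) (Fin 2) ℂ),
    (∀ j, IsSingleQubitPauli (Q j)) ∧ P = (Complex.I ^ (ℓ : ℕ)) • tensorn n Q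

lemma tensorn_one (n : ℕ) : tensorn n (fun _ => (1 : Matrix (Fin 2) (Fin 2) ℂ)) = 1 := by
  ext x y
  by_cases h : x = y
  · subst h
    simp [tensorn, Matrix.one_apply]
  · have hj : ∃ j, x j ≠ y j := by
      by_contra hc
      push_neg at hc
      exact h (funext hc)
    obtain ⟨j, hj⟩ := hj
    rw [tensorn, Matrix.one_apply]
    rw [if_neg h]
    exact Finset.prod_eq_zero (Finset.mem_univ j) (by simp [Matrix.one_apply, hj])

lemma tensorn_mul {n : ℕ} (Q R : Fin n → Matrix (Fin 2) (Fin 2) ℂ) :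
    tensorn n Q * tensorn n R = tensorn n (fun j => Q j * R j) := by
  ext x y
  simp only [tensorn, Matrix.mul_apply]
  rw [Finset.prod_univ_sum (fun _ => (Finset.univ : Finset (Fin 2)))
    (fun j b => Q j (x j) b * R j b (y j))]
  rw [Fintype.piFinset_univ]
  exact Finset.sum_congr rfl fun z _ => (Finset.prod_mul_distrib).symm

lemma IsSingleQubitPauli.mul_self {Q : Matrix (Fin 2) (Fin 2) ℂ}
    (h : IsSingleQubitPauli Q) : Q * Q = 1 := by
  rcases h with h | h | h | h <;> subst h
  · simp
  · rw [PauliX, Matrix.mul_fin_two, Matrix.one_fin_two]; norm_num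
  · rw [PauliY, Matrix.mul_fin_two, Matrix.one_fin_two]; norm_num [Complex.I_mul_I]
  · rw [PauliZ, Matrix.mul_fin_two, Matrix.one_fin_two]; norm_num

/-- The invertible `n`-qubit operators. -/
abbrev MatU (n : ℕ) := (QMat n)ˣ

/-- The `n`-qubit Pauli group, as a subgroup of the invertible 2^n × 2^n matrices. -/
def PauliGrp (n : ℕ) : Subgroup (MatU n) :=
  Subgroup.closure {u : MatU n | IsPauli (u : QMat n)}

/-- The matrix `i·I` as a unit. -/
def phaseUnit (n : ℕ) : MatU n :=
  Units.map (algebraMap ℂ (QMat n)).toMonoidHom (Units.mk0 Complex.I Complex.I_ne_zero)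

lemma phaseUnit_isPauli (n : ℕ) : IsPauli ((phaseUnit n : MatU n) : QMat n) := by
  refine ⟨1, fun _ => 1, fun _ => Or.inl rfl, ?_⟩
  rw [tensorn_one]
  show algebraMap ℂ (QMat n) Complex.I = _
  rw [Algebra.algebraMap_eq_smul_one]
  norm_num

lemma phaseUnit_mem (n : ℕ) : phaseUnit n ∈ PauliGrp n :=
  Subgroup.subset_closure (phaseUnit_isPauli n)

def phaseElt (n : ℕ) : ↥(PauliGrp n) := ⟨phaseUnit n, phaseUnit_mem n⟩

/-- The subgroup `⟨iI⟩` of the Pauli group. -/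
def phaseSub (n : ℕ) : Subgroup ↥(PauliGrp n) := Subgroup.zpowers (phaseElt n)

lemma phaseUnit_comm {n : ℕ} (g : MatU n) : g * phaseUnit n = phaseUnit n * g := by
  refine Units.ext ?_
  show (g : QMat n) * (algebraMap ℂ (QMat n) Complex.I) =
    (algebraMap ℂ (QMat n) Complex.I) * (g : QMat n)
  exact (Algebra.commutes Complex.I (g : QMat n)).symm

instance phaseSub_normal (n : ℕ) : (phaseSub n).Normal := by
  constructor
  intro h hmem g
  obtain ⟨k, hk⟩ := Subgroup.mem_zpowers_iff.mp hmem
  have hc0 : Commute g (phaseElt n) := Subtype.ext (phaseUnit_comm (g : MatU n))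
  have hc : Commute g h := hk ▸ hc0.zpow_right k
  have hgh : g * h * g⁻¹ = h := by
    rw [hc.eq, mul_assoc, mul_inv_cancel, mul_one]
  rw [hgh]
  exact hmem

/-- The phase-less Pauli group `P̂_n = P_n / ⟨iI⟩`. -/
abbrev PhaselessPauli (n : ℕ) := ↥(PauliGrp n) ⧸ phaseSub n

/-- Two phase-less Pauli operators commute if (any, equivalently every, pair of)
representatives commute as matrices. -/
def PCommute {n : ℕ} (x y : PhaselessPauli n) : Prop :=
  ∃ P Q : ↥(PauliGrp n), QuotientGroup.mk P = x ∧ QuotientGroup.mk Q = y ∧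
    ((P : MatU n) : QMat n) * ((Q : MatU n) : QMat n) =
      ((Q : MatU n) : QMat n) * ((P : MatU n) : QMat n)

/-- A commuting subgroup of the phase-less Pauli group `P̂_n`: all pairs of elements
commute. -/
def IsCommutingSubgroup {n : ℕ} (M : Subgroup (PhaselessPauli n)) : Prop :=
  ∀ x ∈ M, ∀ y ∈ M, PCommute x y

/-- The tensor factors of a Pauli matrix (junk value otherwise); for a Pauli matrix the
decomposition `P = i^ℓ · Q_1 ⊗ ⋯ ⊗ Q_n` is unique. -/
def pauliFactor {n : ℕ} (P : QMat n) : Fin n → Matrix (Fin 2) (Fin 2) ℂ :=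
  @dite _ (IsPauli P) (Classical.dec _) (fun h => h.choose_spec.choose) (fun _ => fun _ => 1)

lemma pauliFactor_single {n : ℕ} (P : QMat n) (j : Fin n) :
    IsSingleQubitPauli (pauliFactor P j) := by
  rw [pauliFactor]
  split
  · next h => exact h.choose_spec.choose_spec.1 j
  · exact Or.inl rfl

/-- The matrix representing the local view `ρ_A(P)`: the tensor factors of `P` on `A`,
identity elsewhere (and no phase). -/
def maskMat {n : ℕ} (A : Finset (Fin n)) (P : QMat n) : QMat n :=
  tensorn n (fun j => if j ∈ A then pauliFactor P j else 1)

lemma maskMat_isPauli {n : ℕ} (A : Finset (Fin n)) (P : QMat n) : IsPauli (maskMat A P) := by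
  refine ⟨0, fun j => if j ∈ A then pauliFactor P j else 1, ?_, ?_⟩
  · intro j
    by_cases h : j ∈ A
    · simpa [h] using pauliFactor_single P j
    · simp [h, IsSingleQubitPauli]
  · simp [maskMat]

lemma maskMat_mul_self {n : ℕ} (A : Finset (Fin n)) (P : QMat n) :
    maskMat A P * maskMat A P = 1 := by
  rw [maskMat, tensorn_mul]
  have h1 : (fun j => (if j ∈ A then pauliFactor P j else 1) *
      (if j ∈ A then pauliFactor P j else 1)) = fun _ : Fin n => (1 : Matrix (Fin 2) (Fin 2) ℂ) := by
    funext j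
    by_cases h : j ∈ A
    · simp only [h, if_true]
      exact (pauliFactor_single P j).mul_self
    · simp [h]
  rw [h1, tensorn_one]

/-- The local view `ρ_A(P)` as a unit. -/
def maskUnit {n : ℕ} (A : Finset (Fin n)) (P : QMat n) : MatU n :=
  ⟨maskMat A P, maskMat A P, maskMat_mul_self A P, maskMat_mul_self A P⟩

lemma maskUnit_mem {n : ℕ} (A : Finset (Fin n)) (P : QMat n) : maskUnit A P ∈ PauliGrp n :=
  Subgroup.subset_closure (maskMat_isPauli A P)

/-- The local view `ρ_A(P) ∈ P̂_n` of a Pauli operator `P` at `A ⊆ [n]`. -/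
def localView {n : ℕ} (A : Finset (Fin n)) (P : QMat n) : PhaselessPauli n :=
  QuotientGroup.mk (⟨maskUnit A P, maskUnit_mem A P⟩ : ↥(PauliGrp n))

/-- `c(M)`: the largest dimension `log₂|K|` of a commuting subgroup `K ≤ M`. -/
def cdim {n : ℕ} (M : Subgroup (PhaselessPauli n)) : ℕ :=
  sSup ((fun K : Subgroup (PhaselessPauli n) => Nat.log 2 (Nat.card K)) ''
    {K | K ≤ M ∧ IsCommutingSubgroup K})

section Symplectic
open Module
variable {K : Type*} [Field K] {M : Type*} [AddCommGroup M] [Module K M] [FiniteDimensional K M]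

/-- isotropic submodule -/
def SIsotropic (B : LinearMap.BilinForm K M) (V : Submodule K M) : Prop :=
  ∀ x ∈ V, ∀ y ∈ V, B x y = 0

lemma sisotropic_le_orthogonal {B : LinearMap.BilinForm K M} {V : Submodule K M}
    (hV : SIsotropic B V) : V ≤ B.orthogonal V := by
  intro x hx n hn
  exact hV n hn x hx

lemma SIsotropic.finrank_le {B : LinearMap.BilinForm K M} (halt : B.IsAlt)
    {V : Submodule K M} (hV : SIsotropic B V) :
    2 * finrank K V ≤ finrank K M + finrank K (B.orthogonal ⊤) := by
  have hrefl : B.IsRefl := halt.isRefl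
  set rad := B.orthogonal ⊤ with hrad
  set V' := V ⊔ rad with hV'
  have hradmem : ∀ x ∈ rad, ∀ y : M, B y x = 0 := fun x hx y => hx y trivial
  have hV'iso : SIsotropic B V' := by
    intro x hx y hy
    rw [Submodule.mem_sup] at hx hy
    obtain ⟨v, hv, r, hr, rfl⟩ := hx
    obtain ⟨v', hv', r', hr', rfl⟩ := hy
    rw [map_add, map_add, LinearMap.add_apply, LinearMap.add_apply]
    rw [hV v hv v' hv', hradmem r' hr' v, hradmem r' hr' r,
      hrefl v' r (hradmem r hr v')]
    simp
  have key := LinearMap.BilinForm.finrank_add_finrank_orthogonal (B := B) hrefl V'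
  have hradle : rad ≤ V' := le_sup_right
  have hinf : V' ⊓ rad = rad := inf_eq_right.mpr hradle
  rw [hinf] at key
  have h1 : finrank K V ≤ finrank K V' := Submodule.finrank_mono le_sup_left
  have h2 : finrank K V' ≤ finrank K (B.orthogonal V') :=
    Submodule.finrank_mono (sisotropic_le_orthogonal hV'iso)
  omega

lemma exists_max_isotropic (B : LinearMap.BilinForm K M) (halt : B.IsAlt) :
    ∃ U : Submodule K M, SIsotropic B U ∧
      2 * finrank K U = finrank K M + finrank K (B.orthogonal ⊤) := by
  have hrefl : B.IsRefl := halt.isRefl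
  set S : Set ℕ := {d | ∃ U : Submodule K M, SIsotropic B U ∧ finrank K U = d} with hS
  have hne : S.Nonempty := ⟨0, ⊥, by intro x hx; simp at hx; simp [hx], finrank_bot K M⟩
  have hbdd : BddAbove S := by
    refine ⟨finrank K M, ?_⟩
    rintro d ⟨U, _, rfl⟩
    exact Submodule.finrank_le U
  obtain ⟨U, hUiso, hUrank⟩ := Nat.sSup_mem hne hbdd
  refine ⟨U, hUiso, ?_⟩
  have hmax : ∀ U' : Submodule K M, SIsotropic B U' → finrank K U' ≤ finrank K U := by
    intro U' hU'
    rw [hUrank]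
    exact le_csSup hbdd ⟨U', hU', rfl⟩
  -- orthogonal U ≤ U
  have horth : B.orthogonal U ≤ U := by
    by_contra hc
    rw [SetLike.not_le_iff_exists] at hc
    obtain ⟨x, hxo, hxU⟩ := hc
    have hx0 : ∀ u ∈ U, B u x = 0 := fun u hu => hxo u hu
    set U' := U ⊔ K ∙ x with hU'
    have hU'iso : SIsotropic B U' := by
      intro a ha b hb
      rw [Submodule.mem_sup] at ha hb
      obtain ⟨u, hu, r, hr, rfl⟩ := ha
      obtain ⟨u', hu', r', hr', rfl⟩ := hb
      obtain ⟨c, rfl⟩ := Submodule.mem_span_singleton.mp hr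
      obtain ⟨c', rfl⟩ := Submodule.mem_span_singleton.mp hr'
      rw [map_add, map_add, LinearMap.add_apply, LinearMap.add_apply]
      simp only [_root_.map_smul, LinearMap.smul_apply, smul_eq_mul]
      rw [hUiso u hu u' hu', hx0 u hu, hrefl u' x (hx0 u' hu'), halt x]
      ring
    have hlt : U < U' := lt_of_le_of_ne le_sup_left (by
      intro h
      exact hxU (h ▸ Submodule.mem_sup_right (Submodule.mem_span_singleton_self x)))
    exact absurd (hmax U' hU'iso) (not_le.mpr (Submodule.finrank_lt_finrank_of_lt hlt))
  have heq : B.orthogonal U = U := le_antisymm horth (sisotropic_le_orthogonal hUiso)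
  have hradle : B.orthogonal ⊤ ≤ U := heq ▸ LinearMap.BilinForm.orthogonal_le le_top
  have key := LinearMap.BilinForm.finrank_add_finrank_orthogonal (B := B) hrefl U
  rw [heq, inf_eq_right.mpr hradle] at key
  omega

end Symplectic
section SingleQubit

lemma smul2 (c : ℂ) (a b d e : ℂ) : c • !![a,b;d,e] = !![c*a,c*b;c*d,c*e] := by
  norm_num [Matrix.smul_of, Matrix.smul_cons, Matrix.smul_empty, smul_eq_mul]

lemma pXY : PauliX * PauliY = Complex.I • PauliZ := by
  rw [PauliX, PauliY, PauliZ, Matrix.mul_fin_two, smul2]; norm_num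
lemma pYX : PauliY * PauliX = (-Complex.I) • PauliZ := by
  rw [PauliX, PauliY, PauliZ, Matrix.mul_fin_two, smul2]; norm_num
lemma pYZ : PauliY * PauliZ = Complex.I • PauliX := by
  rw [PauliX, PauliY, PauliZ, Matrix.mul_fin_two, smul2]; norm_num
lemma pZY : PauliZ * PauliY = (-Complex.I) • PauliX := by
  rw [PauliX, PauliY, PauliZ, Matrix.mul_fin_two, smul2]; norm_num
lemma pZX : PauliZ * PauliX = Complex.I • PauliY := by
  rw [PauliX, PauliY, PauliZ, Matrix.mul_fin_two, smul2]
  norm_num [Complex.I_mul_I]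
lemma pXZ : PauliX * PauliZ = (-Complex.I) • PauliY := by
  rw [PauliX, PauliY, PauliZ, Matrix.mul_fin_two, smul2]
  norm_num [Complex.I_mul_I]

lemma traceX : PauliX.trace = 0 := by rw [PauliX, Matrix.trace_fin_two]; norm_num
lemma traceY : PauliY.trace = 0 := by rw [PauliY, Matrix.trace_fin_two]; norm_num
lemma traceZ : PauliZ.trace = 0 := by rw [PauliZ, Matrix.trace_fin_two]; norm_num

lemma I_pow_three : Complex.I ^ (3:ℕ) = -Complex.I := by
  rw [pow_succ, pow_two, Complex.I_mul_I]; ring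

/-- product of two single-qubit Paulis is a phase times a single-qubit Pauli -/
lemma single_mul {Q R : Matrix (Fin 2) (Fin 2) ℂ} (hQ : IsSingleQubitPauli Q)
    (hR : IsSingleQubitPauli R) :
    ∃ (k : Fin 4) (S : Matrix (Fin 2) (Fin 2) ℂ), IsSingleQubitPauli S ∧
      Q * R = (Complex.I ^ (k : ℕ)) • S := by
  rcases hQ with rfl | rfl | rfl | rfl <;> rcases hR with rfl | rfl | rfl | rfl
  · exact ⟨0, 1, Or.inl rfl, by simp⟩
  · exact ⟨0, PauliX, Or.inr (Or.inl rfl), by simp⟩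
  · exact ⟨0, PauliY, Or.inr (Or.inr (Or.inl rfl)), by simp⟩
  · exact ⟨0, PauliZ, Or.inr (Or.inr (Or.inr rfl)), by simp⟩
  · exact ⟨0, PauliX, Or.inr (Or.inl rfl), by simp⟩
  · exact ⟨0, 1, Or.inl rfl, by
      rw [IsSingleQubitPauli.mul_self (Q:=PauliX) (Or.inr (Or.inl rfl))]; simp⟩
  · exact ⟨1, PauliZ, Or.inr (Or.inr (Or.inr rfl)), by rw [pXY]; norm_num⟩
  · exact ⟨3, PauliY, Or.inr (Or.inr (Or.inl rfl)), by rw [pXZ, show ((3:Fin 4):ℕ) = 3 from rfl, I_pow_three]⟩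
  · exact ⟨0, PauliY, Or.inr (Or.inr (Or.inl rfl)), by simp⟩
  · exact ⟨3, PauliZ, Or.inr (Or.inr (Or.inr rfl)), by rw [pYX, show ((3:Fin 4):ℕ) = 3 from rfl, I_pow_three]⟩
  · exact ⟨0, 1, Or.inl rfl, by
      rw [IsSingleQubitPauli.mul_self (Q:=PauliY) (Or.inr (Or.inr (Or.inl rfl)))]; simp⟩
  · exact ⟨1, PauliX, Or.inr (Or.inl rfl), by rw [pYZ]; norm_num⟩
  · exact ⟨0, PauliZ, Or.inr (Or.inr (Or.inr rfl)), by simp⟩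
  · exact ⟨1, PauliY, Or.inr (Or.inr (Or.inl rfl)), by rw [pZX]; norm_num⟩
  · exact ⟨3, PauliX, Or.inr (Or.inl rfl), by rw [pZY, show ((3:Fin 4):ℕ) = 3 from rfl, I_pow_three]⟩
  · exact ⟨0, 1, Or.inl rfl, by
      rw [IsSingleQubitPauli.mul_self (Q:=PauliZ) (Or.inr (Or.inr (Or.inr rfl)))]; simp⟩

/-- traces of products of distinct single-qubit Paulis vanish -/
lemma single_trace_ne {Q R : Matrix (Fin 2) (Fin 2) ℂ} (hQ : IsSingleQubitPauli Q)
    (hR : IsSingleQubitPauli R) (h : Q ≠ R) : (Q * R).trace = 0 := by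
  rcases hQ with rfl | rfl | rfl | rfl <;> rcases hR with rfl | rfl | rfl | rfl <;>
    first
      | exact absurd rfl h
      | simp [traceX, traceY, traceZ]
      | (rw [pXY]; simp [traceZ]) | (rw [pXZ]; simp [traceY]) | (rw [pYX]; simp [traceZ])
      | (rw [pYZ]; simp [traceX]) | (rw [pZX]; simp [traceY]) | (rw [pZY]; simp [traceX])

lemma single_trace_self {Q : Matrix (Fin 2) (Fin 2) ℂ} (hQ : IsSingleQubitPauli Q) :
    (Q * Q).trace = 2 := by
  rw [hQ.mul_self, Matrix.trace_one]; simp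

/-- two single-qubit Paulis commute or anticommute -/
lemma single_comm_or_anticomm {Q R : Matrix (Fin 2) (Fin 2) ℂ} (hQ : IsSingleQubitPauli Q)
    (hR : IsSingleQubitPauli R) : Q * R = R * Q ∨ Q * R = -(R * Q) := by
  rcases hQ with rfl | rfl | rfl | rfl <;> rcases hR with rfl | rfl | rfl | rfl <;>
    first
      | exact Or.inl rfl
      | exact Or.inl (by simp)
      | exact Or.inr (by rw [pXY, pYX]; simp) | exact Or.inr (by rw [pYX, pXY]; simp)
      | exact Or.inr (by rw [pXZ, pZX]; simp) | exact Or.inr (by rw [pZX, pXZ]; simp)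
      | exact Or.inr (by rw [pYZ, pZY]; simp) | exact Or.inr (by rw [pZY, pYZ]; simp)

end SingleQubit
section TensornFacts
variable {n : ℕ}

lemma tensorn_smul (c : Fin n → ℂ) (Q : Fin n → Matrix (Fin 2) (Fin 2) ℂ) :
    tensorn n (fun j => c j • Q j) = (∏ j, c j) • tensorn n Q := by
  ext x y
  simp [tensorn, Matrix.smul_apply, smul_eq_mul, Finset.prod_mul_distrib]

lemma tensorn_trace (Q : Fin n → Matrix (Fin 2) (Fin 2) ℂ) :
    (tensorn n Q).trace = ∏ j, (Q j).trace := by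
  classical
  have h2 : ∏ j, (Q j).trace = ∏ j, ∑ b, Q j b b := by
    simp [Matrix.trace, Matrix.diag]
  rw [h2, Finset.prod_univ_sum, Fintype.piFinset_univ]
  simp [Matrix.trace, Matrix.diag, tensorn]

lemma tensorn_self_trace {Q : Fin n → Matrix (Fin 2) (Fin 2) ℂ}
    (hQ : ∀ j, IsSingleQubitPauli (Q j)) :
    (tensorn n Q * tensorn n Q).trace = 2 ^ n := by
  rw [tensorn_mul, tensorn_trace,
    Finset.prod_congr rfl (fun j _ => single_trace_self (hQ j))]
  simp

lemma two_pow_ne_zero' : (2 : ℂ) ^ n ≠ 0 := pow_ne_zero n two_ne_zero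

lemma tensorn_unique {Q R : Fin n → Matrix (Fin 2) (Fin 2) ℂ}
    (hQ : ∀ j, IsSingleQubitPauli (Q j)) (hR : ∀ j, IsSingleQubitPauli (R j))
    {c : ℂ} (h : tensorn n Q = c • tensorn n R) : Q = R ∧ c = 1 := by
  have hcne : c ≠ 0 := by
    rintro rfl
    rw [zero_smul] at h
    have := tensorn_self_trace hQ
    rw [h, zero_mul, Matrix.trace_zero] at this
    exact two_pow_ne_zero' this.symm
  have hQR : Q = R := by
    by_contra hne
    have hk : ∃ k, Q k ≠ R k := by
      by_contra hc; push_neg at hc; exact hne (funext hc)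
    obtain ⟨k, hk⟩ := hk
    have h1 : (tensorn n Q * tensorn n R).trace = 0 := by
      rw [tensorn_mul, tensorn_trace]
      exact Finset.prod_eq_zero (Finset.mem_univ k) (single_trace_ne (hQ k) (hR k) hk)
    rw [h, Matrix.smul_mul, Matrix.trace_smul, tensorn_self_trace hR, smul_eq_mul] at h1
    exact two_pow_ne_zero' ((mul_eq_zero.mp h1).resolve_left hcne)
  subst hQR
  refine ⟨rfl, ?_⟩
  have h1 := tensorn_self_trace hQ
  nth_rewrite 1 [h] at h1
  rw [Matrix.smul_mul, Matrix.trace_smul, tensorn_self_trace hQ, smul_eq_mul] at h1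
  have := mul_right_cancel₀ two_pow_ne_zero' (h1.trans (one_mul ((2:ℂ)^n)).symm)
  exact this

lemma I_pow_four : Complex.I ^ (4:ℕ) = 1 := by
  rw [show (4:ℕ) = 2*2 from rfl, pow_mul]
  norm_num [pow_two, Complex.I_mul_I]

lemma Ipow_mod (m : ℕ) : Complex.I ^ m = Complex.I ^ (m % 4) := by
  conv_lhs => rw [← Nat.div_add_mod m 4]
  rw [pow_add, pow_mul, I_pow_four, one_pow, one_mul]

lemma I_pow_fin_inj (a b : Fin 4) (h : Complex.I ^ (a:ℕ) = Complex.I ^ (b:ℕ)) : a = b := by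
  fin_cases a <;> fin_cases b <;>
    first
      | rfl
      | (exfalso; revert h;
         norm_num [pow_succ, Complex.I_mul_I, Complex.ext_iff])

lemma pauli_decomp_unique {Q R : Fin n → Matrix (Fin 2) (Fin 2) ℂ}
    (hQ : ∀ j, IsSingleQubitPauli (Q j)) (hR : ∀ j, IsSingleQubitPauli (R j))
    (a b : Fin 4)
    (h : (Complex.I ^ (a:ℕ)) • tensorn n Q = (Complex.I ^ (b:ℕ)) • tensorn n R) :
    Q = R ∧ a = b := by
  have hIa : (Complex.I : ℂ) ^ (a:ℕ) ≠ 0 := pow_ne_zero _ Complex.I_ne_zero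
  have h' : tensorn n Q = ((Complex.I ^ (a:ℕ))⁻¹ * Complex.I ^ (b:ℕ)) • tensorn n R := by
    rw [mul_smul, ← h, ← mul_smul, inv_mul_cancel₀ hIa, one_smul]
  obtain ⟨hQR, hc⟩ := tensorn_unique hQ hR h'
  exact ⟨hQR, I_pow_fin_inj a b ((inv_mul_eq_one₀ hIa).mp hc)⟩

end TensornFacts
section PauliAlgebra
variable {n : ℕ}

lemma isPauli_of_nat (m : ℕ) (Q : Fin n → Matrix (Fin 2) (Fin 2) ℂ)
    (hQ : ∀ j, IsSingleQubitPauli (Q j)) : IsPauli ((Complex.I ^ m) • tensorn n Q) :=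
  ⟨⟨m % 4, Nat.mod_lt _ (by norm_num)⟩, Q, hQ, by rw [Ipow_mod m]⟩

lemma isPauli_one : IsPauli (1 : QMat n) :=
  ⟨0, fun _ => 1, fun _ => Or.inl rfl, by rw [tensorn_one]; simp⟩

lemma IsPauli.mul {P P' : QMat n} (h : IsPauli P) (h' : IsPauli P') : IsPauli (P * P') := by
  obtain ⟨a, Q, hQ, rfl⟩ := h
  obtain ⟨b, R, hR, rfl⟩ := h'
  choose k S hS hQR using fun j => single_mul (hQ j) (hR j)
  have h1 : (fun j => Q j * R j) = fun j => (Complex.I ^ ((k j : ℕ))) • S j := funext hQR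
  rw [Matrix.smul_mul, Matrix.mul_smul, smul_smul, tensorn_mul, h1, tensorn_smul,
    Finset.prod_pow_eq_pow_sum, smul_smul, ← pow_add, ← pow_add]
  exact isPauli_of_nat _ S hS

lemma IsPauli.neg {P : QMat n} (h : IsPauli P) : IsPauli (-P) := by
  obtain ⟨a, Q, hQ, rfl⟩ := h
  have : -((Complex.I ^ (a:ℕ)) • tensorn n Q) = (Complex.I ^ ((a:ℕ) + 2)) • tensorn n Q := by
    rw [pow_add, pow_two, Complex.I_mul_I, mul_neg_one, neg_smul]
  rw [this]
  exact isPauli_of_nat _ Q hQ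

lemma IsPauli.sq_pm {P : QMat n} (h : IsPauli P) : P * P = 1 ∨ P * P = -1 := by
  obtain ⟨a, Q, hQ, rfl⟩ := h
  have h1 : (fun j => Q j * Q j) = fun _ => (1 : Matrix (Fin 2) (Fin 2) ℂ) :=
    funext fun j => (hQ j).mul_self
  rw [Matrix.smul_mul, Matrix.mul_smul, smul_smul, tensorn_mul, h1, tensorn_one,
    ← pow_add, ← two_mul, pow_mul]
  norm_num [pow_two, Complex.I_mul_I]
  rcases Nat.even_or_odd (a:ℕ) with he | ho
  · left; rw [he.neg_one_pow]; simp
  · right; rw [ho.neg_one_pow]; simp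

lemma IsPauli.exists_inv {P : QMat n} (h : IsPauli P) :
    ∃ P', IsPauli P' ∧ P * P' = 1 ∧ P' * P = 1 := by
  rcases h.sq_pm with h1 | h1
  · exact ⟨P, h, h1, h1⟩
  · refine ⟨-P, h.neg, ?_, ?_⟩
    · rw [mul_neg, h1, neg_neg]
    · rw [neg_mul, h1, neg_neg]

lemma pauliGrp_isPauli {u : MatU n} (hu : u ∈ PauliGrp n) : IsPauli (u : QMat n) := by
  induction hu using Subgroup.closure_induction with
  | mem x hx => exact hx
  | one => exact isPauli_one
  | mul x y hxm hym hx hy => exact hx.mul hy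
  | inv x hxm hx =>
    obtain ⟨P', hP', h1, h2⟩ := hx.exists_inv
    have : ((x⁻¹ : MatU n) : QMat n) = P' := by
      calc ((x⁻¹ : MatU n) : QMat n) = ((x⁻¹ : MatU n) : QMat n) * ((x : QMat n) * P') := by
            rw [h1, mul_one]
        _ = (((x⁻¹ : MatU n) : QMat n) * (x : QMat n)) * P' := (mul_assoc _ _ _).symm
        _ = P' := by rw [Units.inv_mul, one_mul]
    rw [this]; exact hP'

lemma pauliFactor_val {P : QMat n} (h : IsPauli P) :
    pauliFactor P = h.choose_spec.choose := by
  unfold pauliFactor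
  rw [dif_pos h]

lemma pauliFactor_spec {P : QMat n} (h : IsPauli P) :
    ∃ a : Fin 4, P = (Complex.I ^ ((a:ℕ))) • tensorn n (pauliFactor P) := by
  rw [pauliFactor_val h]
  exact ⟨h.choose, h.choose_spec.choose_spec.2⟩

lemma pauliFactor_eq {P : QMat n} {Q : Fin n → Matrix (Fin 2) (Fin 2) ℂ}
    (hQ : ∀ j, IsSingleQubitPauli (Q j)) (a : Fin 4)
    (hdec : P = (Complex.I ^ (a:ℕ)) • tensorn n Q) : pauliFactor P = Q := by
  have hP : IsPauli P := ⟨a, Q, hQ, hdec⟩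
  obtain ⟨b, hb⟩ := pauliFactor_spec hP
  exact (pauli_decomp_unique (pauliFactor_single P) hQ b a (hb.symm.trans hdec)).1

/-- sign of (anti)commutation -/
def psign {m : Type*} [Fintype m] [DecidableEq m]
    (Q R : Matrix m m ℂ) : ℂ := open scoped Classical in if Q * R = R * Q then 1 else -1

lemma psign_pm {m : Type*} [Fintype m] [DecidableEq m] (Q R : Matrix m m ℂ) :
    psign Q R = 1 ∨ psign Q R = -1 := by
  unfold psign; split <;> simp

lemma psign_comm {m : Type*} [Fintype m] [DecidableEq m] {Q R : Matrix m m ℂ}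
    (h : Q * R = R * Q) : psign Q R = 1 := by unfold psign; rw [if_pos h]

lemma psign_one_right {m : Type*} [Fintype m] [DecidableEq m] (Q : Matrix m m ℂ) :
    psign Q 1 = 1 := psign_comm (by simp)

lemma psign_symm {m : Type*} [Fintype m] [DecidableEq m] (Q R : Matrix m m ℂ) :
    psign Q R = psign R Q := by
  unfold psign
  by_cases h : Q * R = R * Q
  · rw [if_pos h, if_pos h.symm]
  · rw [if_neg h, if_neg (fun hc => h hc.symm)]

lemma mat2_one_ne_zero : (1 : Matrix (Fin 2) (Fin 2) ℂ) ≠ 0 := by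
  intro h
  have := congr_fun (congr_fun h 0) 0
  simp [Matrix.one_apply] at this

lemma qmat_one_ne_zero : (1 : QMat n) ≠ 0 := by
  intro h
  have := congr_fun (congr_fun h (fun _ => 0)) (fun _ => 0)
  rw [Matrix.one_apply_eq] at this
  exact one_ne_zero this

lemma smul_one_eq_one {n : ℕ} {c : ℂ} (h : c • (1 : QMat n) = 1) : c = 1 := by
  have h2 : c • (1 : QMat n) = (1:ℂ) • 1 := by rw [h, one_smul]
  exact smul_left_injective ℂ qmat_one_ne_zero h2

lemma neg_self_zero {α : Type*} [AddCommGroup α] [Module ℂ α] {A : α} (h : A = -A) : A = 0 := by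
  have h2 : (2:ℂ) • A = 0 := by rw [two_smul]; nth_rewrite 1 [h]; simp
  simpa [smul_eq_zero] using h2

lemma single_psign {Q R : Matrix (Fin 2) (Fin 2) ℂ} (hQ : IsSingleQubitPauli Q)
    (hR : IsSingleQubitPauli R) : Q * R = psign Q R • (R * Q) := by
  rcases single_comm_or_anticomm hQ hR with h | h
  · rw [psign_comm h, one_smul]; exact h
  · have hne : Q * R ≠ R * Q := by
      intro hc
      have h0 : R * Q = 0 := neg_self_zero (hc.symm.trans h)
      have h1 : (R * Q) * (Q * R) = 1 := by
        rw [mul_assoc, ← mul_assoc Q, hQ.mul_self, one_mul, hR.mul_self]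
      rw [h0, zero_mul] at h1
      exact mat2_one_ne_zero h1.symm
    unfold psign
    rw [if_neg hne, h, neg_smul, one_smul]

lemma tensorn_psign {F G : Fin n → Matrix (Fin 2) (Fin 2) ℂ}
    (hF : ∀ j, IsSingleQubitPauli (F j)) (hG : ∀ j, IsSingleQubitPauli (G j)) :
    tensorn n F * tensorn n G
      = (∏ j, psign (F j) (G j)) • (tensorn n G * tensorn n F) := by
  rw [tensorn_mul, tensorn_mul]
  have h1 : (fun j => F j * G j) = fun j => psign (F j) (G j) • (G j * F j) :=
    funext fun j => single_psign (hF j) (hG j)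
  rw [h1, tensorn_smul]

lemma prod_psign_pm (f g : Fin n → Matrix (Fin 2) (Fin 2) ℂ) :
    (∏ j, psign (f j) (g j)) = 1 ∨ (∏ j, psign (f j) (g j)) = -1 := by
  refine Finset.prod_induction _ (fun x => x = 1 ∨ x = -1) ?_ (Or.inl rfl)
    (fun j _ => psign_pm (f j) (g j))
  rintro a b (rfl | rfl) (rfl | rfl) <;> norm_num

/-- the fundamental commutation relation for Pauli matrices -/
lemma pauli_smul_relation {P Q : QMat n} (hP : IsPauli P) (hQ : IsPauli Q) :
    P * Q = (∏ j, psign (pauliFactor P j) (pauliFactor Q j)) • (Q * P) := by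
  obtain ⟨a, ha⟩ := pauliFactor_spec hP
  obtain ⟨b, hb⟩ := pauliFactor_spec hQ
  have hFs := pauliFactor_single P
  have hGs := pauliFactor_single Q
  set F := pauliFactor P with hF
  set G := pauliFactor Q with hG
  rw [ha, hb, Matrix.smul_mul, Matrix.mul_smul, Matrix.smul_mul, Matrix.mul_smul,
    smul_smul, smul_smul, tensorn_psign hFs hGs, smul_smul, smul_smul]
  congr 1
  ring

/-- scalars don't change commutation signs -/
lemma psign_smul {m : Type*} [Fintype m] [DecidableEq m] (Q R : Matrix m m ℂ)
    {c d : ℂ} (hc : c ≠ 0) (hd : d ≠ 0) : psign (c • Q) (d • R) = psign Q R := by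
  unfold psign
  have : (c • Q) * (d • R) = (d • R) * (c • Q) ↔ Q * R = R * Q := by
    rw [Matrix.smul_mul, Matrix.mul_smul, Matrix.smul_mul, Matrix.mul_smul, smul_smul, smul_smul,
      mul_comm d c]
    constructor
    · intro h
      have := smul_right_injective (Matrix m m ℂ) (mul_ne_zero hc hd) h
      exact this
    · intro h; rw [h]
  by_cases h : Q * R = R * Q
  · rw [if_pos h, if_pos (this.mpr h)]
  · rw [if_neg h, if_neg (fun hc2 => h (this.mp hc2))]

/-- for invertible matrices, the relation determines the sign -/
lemma psign_eq_of_rel {m : Type*} [Fintype m] [DecidableEq m] {Q R : Matrix m m ℂ}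
    {s : ℂ} (hs : s = 1 ∨ s = -1) (hrel : Q * R = s • (R * Q)) (hne : R * Q ≠ 0) :
    psign Q R = s := by
  rcases hs with rfl | rfl
  · rw [one_smul] at hrel; exact psign_comm hrel
  · have hne2 : ¬ (Q * R = R * Q) := by
      intro hc
      rw [neg_smul, one_smul, hc] at hrel
      exact hne (neg_self_zero hrel)
    unfold psign
    rw [if_neg hne2]

lemma psign_mul_left {m : Type*} [Fintype m] [DecidableEq m] {A B C : Matrix m m ℂ}
    {sA sB : ℂ} (hsA : sA = 1 ∨ sA = -1) (hsB : sB = 1 ∨ sB = -1)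
    (hA : A * C = sA • (C * A)) (hB : B * C = sB • (C * B)) :
    (A * B) * C = (sA * sB) • (C * (A * B)) := by
  calc (A * B) * C = A * (B * C) := mul_assoc _ _ _
    _ = A * (sB • (C * B)) := by rw [hB]
    _ = sB • ((A * C) * B) := by rw [Matrix.mul_smul, mul_assoc]
    _ = sB • ((sA • (C * A)) * B) := by rw [hA]
    _ = (sA * sB) • (C * (A * B)) := by
        rw [Matrix.smul_mul, smul_smul, mul_comm sB sA, mul_assoc]

end PauliAlgebra
section QuotientLevel
variable {n : ℕ}

/-- underlying matrix of an element of the Pauli group -/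
def pmat (u : ↥(PauliGrp n)) : QMat n := ((u : MatU n) : QMat n)

lemma pmat_isPauli (u : ↥(PauliGrp n)) : IsPauli (pmat u) := pauliGrp_isPauli u.2

lemma pmat_mul (u v : ↥(PauliGrp n)) : pmat (u * v) = pmat u * pmat v := rfl

lemma pmat_one : pmat (1 : ↥(PauliGrp n)) = 1 := rfl

lemma unit_ne_zero (u : MatU n) : (u : QMat n) ≠ 0 := by
  intro h
  have h1 : ((u⁻¹ : MatU n) : QMat n) * (u : QMat n) = 1 := Units.inv_mul u
  rw [h, mul_zero] at h1
  exact qmat_one_ne_zero h1.symm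

lemma pmat_ne_zero (u : ↥(PauliGrp n)) : pmat u ≠ 0 := unit_ne_zero _

lemma phaseUnit_val : ((phaseUnit n : MatU n) : QMat n) = Complex.I • 1 := by
  show algebraMap ℂ (QMat n) Complex.I = _
  rw [Algebra.algebraMap_eq_smul_one]

lemma phaseElt_pow_mat (k : ℕ) : pmat ((phaseElt n) ^ k) = (Complex.I ^ k) • 1 := by
  show (((phaseUnit n) ^ k : MatU n) : QMat n) = _
  rw [Units.val_pow_eq_pow_val, phaseUnit_val, smul_pow, one_pow]

lemma phaseElt_four : (phaseElt n) ^ 4 = 1 := by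
  apply Subtype.ext; apply Units.ext
  show pmat ((phaseElt n)^4) = pmat 1
  rw [phaseElt_pow_mat, I_pow_four, one_smul, pmat_one]

lemma phaseElt_comm (u : ↥(PauliGrp n)) : u * phaseElt n = phaseElt n * u :=
  Subtype.ext (phaseUnit_comm (u : MatU n))

lemma mk_eq_mk_of_smul {u v : ↥(PauliGrp n)} (k : ℕ)
    (h : pmat u = (Complex.I ^ k) • pmat v) :
    (QuotientGroup.mk u : PhaselessPauli n) = QuotientGroup.mk v := by
  have huv : u = (phaseElt n) ^ k * v := by
    apply Subtype.ext; apply Units.ext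
    show pmat u = pmat ((phaseElt n)^k * v)
    rw [pmat_mul, phaseElt_pow_mat, Matrix.smul_mul, one_mul, h]
  rw [QuotientGroup.eq, huv]
  have hpc : Commute (phaseElt n) v := (phaseElt_comm v).symm
  have hc : Commute ((phaseElt n)^k)⁻¹ v := (hpc.pow_left k).inv_left
  rw [_root_.mul_inv_rev, mul_assoc, hc.eq, ← mul_assoc, inv_mul_cancel, one_mul]
  exact Subgroup.inv_mem _ (Subgroup.pow_mem _ (Subgroup.mem_zpowers _) k)

lemma mk_eq_mk_iff {u v : ↥(PauliGrp n)} :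
    (QuotientGroup.mk u : PhaselessPauli n) = QuotientGroup.mk v ↔
      ∃ k : ℕ, pmat u = (Complex.I ^ k) • pmat v := by
  constructor
  · intro h
    rw [QuotientGroup.eq] at h
    obtain ⟨z, hz⟩ := Subgroup.mem_zpowers_iff.mp h
    have hz4 : phaseElt n ^ (4:ℤ) = 1 := by
      rw [show ((4:ℤ)) = ((4:ℕ):ℤ) from rfl, zpow_natCast, phaseElt_four]
    set k : ℕ := (z % 4).toNat with hk
    have hsplit : phaseElt n ^ z = phaseElt n ^ k := by
      conv_lhs => rw [← Int.mul_ediv_add_emod z 4]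
      rw [_root_.zpow_add, _root_.zpow_mul, hz4, _root_.one_zpow, one_mul, ← zpow_natCast, hk,
        Int.toNat_of_nonneg (Int.emod_nonneg z (by norm_num))]
    have hv : v = u * phaseElt n ^ k := by
      rw [← hsplit, hz]
      rw [← mul_assoc, mul_inv_cancel, one_mul]
    have hpv : pmat v = (Complex.I ^ k) • pmat u := by
      rw [hv, pmat_mul, phaseElt_pow_mat, Matrix.mul_smul, mul_one]
    refine ⟨3*k, ?_⟩
    rw [hpv, smul_smul, ← pow_add]
    have : 3 * k + k = 4 * k := by ring
    rw [this, pow_mul, I_pow_four, one_pow, one_smul]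
  · rintro ⟨k, h⟩; exact mk_eq_mk_of_smul k h

lemma pauli_psign_relation {P Q : QMat n} (hP : IsPauli P) (hQ : IsPauli Q)
    (hne : Q * P ≠ 0) : P * Q = psign P Q • (Q * P) := by
  have hrel := pauli_smul_relation hP hQ
  rw [psign_eq_of_rel (prod_psign_pm _ _) hrel hne]
  exact hrel

lemma psign_pmat_prod (u v : ↥(PauliGrp n)) :
    psign (pmat u) (pmat v)
      = ∏ j, psign (pauliFactor (pmat u) j) (pauliFactor (pmat v) j) :=
  psign_eq_of_rel (prod_psign_pm _ _)
    (pauli_smul_relation (pmat_isPauli u) (pmat_isPauli v))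
    (by rw [← pmat_mul]; exact pmat_ne_zero _)

lemma psign_pmat_mul (u v w : ↥(PauliGrp n)) :
    psign (pmat (u * v)) (pmat w)
      = psign (pmat u) (pmat w) * psign (pmat v) (pmat w) := by
  have hA := pauli_psign_relation (pmat_isPauli u) (pmat_isPauli w)
    (by rw [← pmat_mul]; exact pmat_ne_zero _)
  have hB := pauli_psign_relation (pmat_isPauli v) (pmat_isPauli w)
    (by rw [← pmat_mul]; exact pmat_ne_zero _)
  have hAB := psign_mul_left (psign_pm _ _) (psign_pm _ _) hA hB
  rw [pmat_mul]
  refine psign_eq_of_rel ?_ hAB ?_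
  · rcases psign_pm (pmat u) (pmat w) with h1 | h1 <;>
      rcases psign_pm (pmat v) (pmat w) with h2 | h2 <;> rw [h1, h2] <;> norm_num
  · rw [← pmat_mul, ← pmat_mul]; exact pmat_ne_zero _

/-- commutation sign on the phaseless Pauli group -/
def Sgn (x y : PhaselessPauli n) : ℂ := psign (pmat x.out) (pmat y.out)

lemma Sgn_mk (u v : ↥(PauliGrp n)) :
    Sgn (QuotientGroup.mk u : PhaselessPauli n) (QuotientGroup.mk v) = psign (pmat u) (pmat v) := by
  obtain ⟨k, hk⟩ := mk_eq_mk_iff.mp (QuotientGroup.out_eq' (QuotientGroup.mk u : PhaselessPauli n))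
  obtain ⟨m, hm⟩ := mk_eq_mk_iff.mp (QuotientGroup.out_eq' (QuotientGroup.mk v : PhaselessPauli n))
  rw [Sgn, hk, hm, psign_smul _ _ (pow_ne_zero _ Complex.I_ne_zero) (pow_ne_zero _ Complex.I_ne_zero)]

lemma Sgn_pm (x y : PhaselessPauli n) : Sgn x y = 1 ∨ Sgn x y = -1 := psign_pm _ _

lemma Sgn_self (x : PhaselessPauli n) : Sgn x x = 1 := psign_comm rfl

lemma Sgn_symm (x y : PhaselessPauli n) : Sgn x y = Sgn y x := psign_symm _ _

lemma Sgn_mul_left (x y z : PhaselessPauli n) : Sgn (x * y) z = Sgn x z * Sgn y z := by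
  induction x using QuotientGroup.induction_on with | _ u =>
  induction y using QuotientGroup.induction_on with | _ v =>
  induction z using QuotientGroup.induction_on with | _ w =>
  rw [show ((QuotientGroup.mk u : PhaselessPauli n) * QuotientGroup.mk v)
      = QuotientGroup.mk (u * v) from rfl]
  rw [Sgn_mk, Sgn_mk, Sgn_mk, psign_pmat_mul]

lemma pcommute_of_sgn {x y : PhaselessPauli n} (h : Sgn x y = 1) : PCommute x y := by
  refine ⟨x.out, y.out, QuotientGroup.out_eq' x, QuotientGroup.out_eq' y, ?_⟩
  unfold Sgn psign at h
  split at h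
  · assumption
  · norm_num at h

end QuotientLevel

section CommPhaseless
variable {n : ℕ}

instance phaselessCommGroup (n : ℕ) : CommGroup (PhaselessPauli n) :=
  { (inferInstance : Group (PhaselessPauli n)) with
    mul_comm := by
      intro a b
      induction a using QuotientGroup.induction_on with | _ u =>
      induction b using QuotientGroup.induction_on with | _ v =>
      show QuotientGroup.mk (u * v) = QuotientGroup.mk (v * u)
      have hrel := pauli_psign_relation (pmat_isPauli u) (pmat_isPauli v)
        (by rw [← pmat_mul]; exact pmat_ne_zero _)
      rcases psign_pm (pmat u) (pmat v) with h | h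
      · refine mk_eq_mk_of_smul 0 ?_
        rw [pmat_mul, pmat_mul, pow_zero, one_smul, hrel, h, one_smul]
      · refine mk_eq_mk_of_smul 2 ?_
        rw [pmat_mul, pmat_mul, hrel, h]
        norm_num [pow_two, Complex.I_mul_I] }

lemma phaseless_sq (x : PhaselessPauli n) : x * x = 1 := by
  induction x using QuotientGroup.induction_on with | _ u =>
  show QuotientGroup.mk (u * u) = QuotientGroup.mk 1
  rcases (pmat_isPauli u).sq_pm with h | h
  · exact mk_eq_mk_of_smul 0 (by rw [pmat_mul, pmat_one, pow_zero, one_smul, h])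
  · refine mk_eq_mk_of_smul 2 ?_
    rw [pmat_mul, pmat_one, h]
    norm_num [pow_two, Complex.I_mul_I]

end CommPhaseless

lemma psign_matrix_prod {n : ℕ} {P Q : QMat n} (hP : IsPauli P) (hQ : IsPauli Q)
    (hne : Q * P ≠ 0) :
    psign P Q = ∏ j, psign (pauliFactor P j) (pauliFactor Q j) :=
  psign_eq_of_rel (prod_psign_pm _ _) (pauli_smul_relation hP hQ) hne
section BqForm
variable {n : ℕ}

def e2 : ZMod 2 → ℂ := fun a => if a = 0 then 1 else -1

lemma e2_zero : e2 0 = 1 := if_pos rfl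
lemma e2_one : e2 1 = -1 := if_neg (by decide)

lemma e2_add (a b : ZMod 2) : e2 (a + b) = e2 a * e2 b := by
  have h : ∀ c : ZMod 2, c = 0 ∨ c = 1 := by decide
  rcases h a with rfl | rfl <;> rcases h b with rfl | rfl <;>
    simp [e2_zero, e2_one, show (1 + 1 : ZMod 2) = 0 by decide] <;> norm_num

lemma e2_inj {a b : ZMod 2} (h : e2 a = e2 b) : a = b := by
  have hc : ∀ c : ZMod 2, c = 0 ∨ c = 1 := by decide
  rcases hc a with rfl | rfl <;> rcases hc b with rfl | rfl <;>
    first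
      | rfl
      | (exfalso; rw [e2_zero, e2_one] at h; norm_num at h)
      | (exfalso; rw [e2_one, e2_zero] at h; norm_num at h)

lemma e2_sum {ι : Type*} (s : Finset ι) (f : ι → ZMod 2) :
    e2 (∑ i ∈ s, f i) = ∏ i ∈ s, e2 (f i) := by
  classical
  induction s using Finset.cons_induction with
  | empty => simp [e2_zero]
  | cons a s ha ih => rw [Finset.sum_cons, Finset.prod_cons, e2_add, ih]

/-- the commutator form on the phaseless Pauli group, with values in `ZMod 2` -/
def bq (x y : PhaselessPauli n) : ZMod 2 :=
  open scoped Classical in if Sgn x y = 1 then 0 else 1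

lemma e2_bq (x y : PhaselessPauli n) : e2 (bq x y) = Sgn x y := by
  unfold bq
  rcases Sgn_pm x y with h | h
  · rw [if_pos h, e2_zero, h]
  · rw [if_neg (by rw [h]; norm_num), e2_one, h]

lemma bq_self (x : PhaselessPauli n) : bq x x = 0 := by
  unfold bq; rw [if_pos (Sgn_self x)]

lemma bq_symm (x y : PhaselessPauli n) : bq x y = bq y x := by
  unfold bq; rw [Sgn_symm]

lemma bq_add_left (x y z : PhaselessPauli n) : bq (x * y) z = bq x z + bq y z :=
  e2_inj (by rw [e2_bq, Sgn_mul_left, e2_add, e2_bq, e2_bq])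

lemma bq_add_right (x y z : PhaselessPauli n) : bq x (y * z) = bq x y + bq x z := by
  rw [bq_symm, bq_add_left, bq_symm y x, bq_symm z x]

lemma bq_comm0 {x y : PhaselessPauli n} (h : bq x y = 0) : PCommute x y := by
  apply pcommute_of_sgn
  have h1 := e2_bq x y
  rw [h, e2_zero] at h1
  exact h1.symm

end BqForm

section MaskFacts
variable {n : ℕ}

lemma maskFactor_single (A : Finset (Fin n)) (P : QMat n) (j : Fin n) :
    IsSingleQubitPauli (if j ∈ A then pauliFactor P j else 1) := by
  by_cases h : j ∈ A
  · simpa [h] using pauliFactor_single P j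
  · simp [h, IsSingleQubitPauli]

lemma pauliFactor_eq_nat {P : QMat n} {Q : Fin n → Matrix (Fin 2) (Fin 2) ℂ}
    (hQ : ∀ j, IsSingleQubitPauli (Q j)) (m : ℕ)
    (hdec : P = (Complex.I ^ m) • tensorn n Q) : pauliFactor P = Q :=
  pauliFactor_eq hQ ⟨m % 4, Nat.mod_lt _ (by norm_num)⟩ (by rw [hdec, Ipow_mod m])

lemma pauliFactor_maskMat (A : Finset (Fin n)) (P : QMat n) :
    pauliFactor (maskMat A P) = fun j => if j ∈ A then pauliFactor P j else 1 :=
  pauliFactor_eq_nat (maskFactor_single A P) 0 (by rw [maskMat]; simp)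

lemma pmat_localViewUnit (A : Finset (Fin n)) (P : QMat n) :
    pmat (⟨maskUnit A P, maskUnit_mem A P⟩ : ↥(PauliGrp n)) = maskMat A P := rfl

lemma psign_mask_prod (A : Finset (Fin n)) (P P' : QMat n) :
    (∏ j, psign (if j ∈ A then pauliFactor P j else 1) (if j ∈ A then pauliFactor P' j else 1))
      = ∏ j ∈ A, psign (pauliFactor P j) (pauliFactor P' j) := by
  have hpt : ∀ j : Fin n, psign (if j ∈ A then pauliFactor P j else 1)
      (if j ∈ A then pauliFactor P' j else 1)
      = if j ∈ A then psign (pauliFactor P j) (pauliFactor P' j) else 1 := by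
    intro j
    by_cases h : j ∈ A
    · simp [h]
    · simp only [h, if_false]; exact psign_comm rfl
  rw [Finset.prod_congr rfl fun j _ => hpt j, Finset.prod_ite_mem, Finset.univ_inter]

lemma Sgn_localView (A : Finset (Fin n)) (P P' : QMat n) :
    Sgn (localView A P) (localView A P')
      = ∏ j ∈ A, psign (pauliFactor P j) (pauliFactor P' j) := by
  rw [localView, localView, Sgn_mk, pmat_localViewUnit, pmat_localViewUnit]
  have hrel := pauli_smul_relation (maskMat_isPauli A P) (maskMat_isPauli A P')
  rw [pauliFactor_maskMat, pauliFactor_maskMat, psign_mask_prod] at hrel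
  refine psign_eq_of_rel ?_ hrel ?_
  · rw [← psign_mask_prod A P P']; exact prod_psign_pm _ _
  · have h2 : maskMat A P' * maskMat A P
        = ((maskUnit A P' * maskUnit A P : MatU n) : QMat n) := rfl
    rw [h2]; exact unit_ne_zero _

lemma localView_mul {P P' : QMat n} (hP : IsPauli P) (hP' : IsPauli P') (A : Finset (Fin n)) :
    localView A (P * P') = localView A P * localView A P' := by
  choose k S hS hFS using fun j =>
    single_mul (pauliFactor_single (n := n) P j) (pauliFactor_single (n := n) P' j)
  obtain ⟨a, ha⟩ := pauliFactor_spec hP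
  obtain ⟨b, hb⟩ := pauliFactor_spec hP'
  -- the factor of the product
  have hfac : pauliFactor (P * P') = S := by
    refine pauliFactor_eq_nat hS ((a:ℕ) + (b:ℕ) + ∑ j, ((k j : ℕ))) ?_
    conv_lhs => rw [ha, hb]
    rw [Matrix.smul_mul, Matrix.mul_smul, smul_smul, tensorn_mul]
    have h1 : (fun j => pauliFactor P j * pauliFactor P' j)
        = fun j => (Complex.I ^ ((k j : ℕ))) • S j := funext hFS
    rw [h1, tensorn_smul, Finset.prod_pow_eq_pow_sum, smul_smul, ← pow_add, ← pow_add]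
  -- mask of the product
  have hmask : maskMat A P * maskMat A P'
      = (Complex.I ^ (∑ j ∈ A, ((k j : ℕ)))) • maskMat A (P * P') := by
    rw [maskMat, maskMat, maskMat, hfac, tensorn_mul]
    have h1 : (fun j => (if j ∈ A then pauliFactor P j else 1) *
        (if j ∈ A then pauliFactor P' j else 1))
        = fun j => (if j ∈ A then (Complex.I ^ ((k j : ℕ))) else 1) •
            (if j ∈ A then S j else 1) := by
      funext j
      by_cases h : j ∈ A
      · simp only [h, if_true]; exact hFS j
      · simp [h]
    rw [h1, tensorn_smul, Finset.prod_ite_mem, Finset.univ_inter,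
      Finset.prod_pow_eq_pow_sum]
  show localView A (P * P')
    = QuotientGroup.mk (⟨maskUnit A P, maskUnit_mem A P⟩ * ⟨maskUnit A P', maskUnit_mem A P'⟩)
  rw [localView]
  symm
  apply mk_eq_mk_of_smul (∑ j ∈ A, ((k j : ℕ)))
  show (maskUnit A P * maskUnit A P' : MatU n).val = _
  rw [Units.val_mul]
  exact hmask

lemma localView_one_factor {P : QMat n} {A : Finset (Fin n)}
    (h : localView A P = 1) : ∀ j ∈ A, pauliFactor P j = 1 := by
  have h1 : (QuotientGroup.mk (⟨maskUnit A P, maskUnit_mem A P⟩ : ↥(PauliGrp n))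
      : PhaselessPauli n) = QuotientGroup.mk 1 := by
    rw [QuotientGroup.mk_one]; exact h
  obtain ⟨k, hk⟩ := mk_eq_mk_iff.mp h1
  rw [pmat_localViewUnit, pmat_one, ← tensorn_one n] at hk
  have := (tensorn_unique (maskFactor_single A P) (fun _ => Or.inl rfl) (c := Complex.I ^ k)
    (by rw [← maskMat]; exact hk)).1
  intro j hj
  have hj1 := congr_fun this j
  rw [if_pos hj] at hj1
  exact hj1

end MaskFacts

section FinitenessInst
variable {n : ℕ}

def pauliParam (n : ℕ) : (Fin 4 × (Fin n → Fin 4)) → QMat n :=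
  fun p => (Complex.I ^ ((p.1 : ℕ))) • tensorn n (fun j => ![1, PauliX, PauliY, PauliZ] (p.2 j))

lemma isPauli_sub_range : {P : QMat n | IsPauli P} ⊆ Set.range (pauliParam n) := by
  rintro P ⟨a, Q, hQ, rfl⟩
  have hcode : ∀ j, ∃ c : Fin 4, Q j = ![1, PauliX, PauliY, PauliZ] c := by
    intro j
    rcases hQ j with h | h | h | h
    exacts [⟨0, h⟩, ⟨1, h⟩, ⟨2, h⟩, ⟨3, h⟩]
  choose c hc using hcode
  refine ⟨(a, c), ?_⟩
  rw [pauliParam]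
  congr 1
  exact congrArg (tensorn n) (funext fun j => (hc j).symm)

instance pauliGrpFinite : Finite ↥(PauliGrp n) := by
  have hfin : {P : QMat n | IsPauli P}.Finite :=
    Set.Finite.subset (Set.finite_range _) isPauli_sub_range
  haveI := hfin.to_subtype
  refine Finite.of_injective
    (fun u : ↥(PauliGrp n) => (⟨pmat u, pmat_isPauli u⟩ : {P : QMat n | IsPauli P})) ?_
  intro u v huv
  apply Subtype.ext; apply Units.ext
  exact congrArg Subtype.val huv

instance phaselessFinite : Finite (PhaselessPauli n) := Quotient.finite _

instance phaselessModule (n : ℕ) : Module (ZMod 2) (Additive (PhaselessPauli n)) :=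
  AddCommGroup.zmodModule (by
    intro x
    show (2:ℕ) • x = 0
    rw [two_nsmul]
    exact phaseless_sq (Additive.toMul x))

end FinitenessInst
section BetaLin
variable {n : ℕ}

/-- `P̂_n` as an additive group (to carry the `ZMod 2` module structure) -/
abbrev MM (n : ℕ) := Additive (PhaselessPauli n)

def bqAdd1 (x : PhaselessPauli n) : MM n →+ ZMod 2 :=
  AddMonoidHom.mk' (fun y => bq x (Additive.toMul y)) (fun y z => bq_add_right x _ _)

def bqAdd2 (n : ℕ) : MM n →+ (MM n →ₗ[ZMod 2] ZMod 2) :=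
  AddMonoidHom.mk' (fun x => AddMonoidHom.toZModLinearMap 2 (bqAdd1 (Additive.toMul x)))
    (fun x y => LinearMap.ext fun z => bq_add_left _ _ _)

/-- the commutator form as a bilinear form over `ZMod 2` -/
def betaLin (n : ℕ) : LinearMap.BilinForm (ZMod 2) (MM n) :=
  AddMonoidHom.toZModLinearMap 2 (bqAdd2 n)

lemma betaLin_apply (x y : PhaselessPauli n) :
    betaLin n (Additive.ofMul x) (Additive.ofMul y) = bq x y := rfl

lemma betaLin_apply' (x y : MM n) :
    betaLin n x y = bq (Additive.toMul x) (Additive.toMul y) := rfl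

lemma betaLin_isAlt : (betaLin n).IsAlt := fun x => bq_self (Additive.toMul x)

lemma betaLin_symm (x y : MM n) : betaLin n x y = betaLin n y x :=
  bq_symm (Additive.toMul x) (Additive.toMul y)

lemma card2pow (X : Type*) [AddCommGroup X] [Module (ZMod 2) X] [Finite X] :
    Nat.card X = 2 ^ Module.finrank (ZMod 2) X := by
  cases nonempty_fintype X
  rw [Nat.card_eq_fintype_card, Module.card_eq_pow_finrank (K := ZMod 2) (V := X), ZMod.card]

end BetaLin

section PiHelpers
variable {K : Type*} [Field K] {V : Type*} [AddCommGroup V] [Module K V] {p : ℕ}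

def piSubEquiv (S : Fin p → Submodule K V) :
    ↥(Submodule.pi Set.univ S) ≃ ∀ i, ↥(S i) where
  toFun x i := ⟨x.1 i, x.2 i (Set.mem_univ i)⟩
  invFun f := ⟨fun i => (f i).1, fun i _ => (f i).2⟩
  left_inv x := Subtype.ext rfl
  right_inv f := funext fun i => Subtype.ext rfl

lemma card_pi_submodule (S : Fin p → Submodule K V) :
    Nat.card ↥(Submodule.pi Set.univ S) = ∏ i, Nat.card ↥(S i) := by
  rw [Nat.card_congr (piSubEquiv S), Nat.card_pi]

/-- the coordinatewise sum form on a pi type -/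
def sumForm (B : LinearMap.BilinForm K V) (p : ℕ) : LinearMap.BilinForm K (Fin p → V) :=
  ∑ i, B.compl₁₂ (LinearMap.proj i) (LinearMap.proj i)

lemma sumForm_apply (B : LinearMap.BilinForm K V) (x y : Fin p → V) :
    sumForm B p x y = ∑ i, B (x i) (y i) := by
  simp [sumForm, LinearMap.sum_apply, LinearMap.compl₁₂_apply, LinearMap.proj_apply]

lemma sumForm_isAlt {B : LinearMap.BilinForm K V} (h : B.IsAlt) : (sumForm B p).IsAlt := by
  intro x
  rw [sumForm_apply]
  exact Finset.sum_eq_zero fun i _ => h (x i)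

lemma sumForm_single (B : LinearMap.BilinForm K V) (i : Fin p) (b : V) (x : Fin p → V) :
    sumForm B p (Pi.single i b) x = B b (x i) := by
  rw [sumForm_apply]
  rw [Finset.sum_eq_single i]
  · rw [Pi.single_eq_same]
  · intro j _ hj
    rw [Pi.single_eq_of_ne hj, LinearMap.map_zero₂]
  · intro h; exact absurd (Finset.mem_univ i) h

lemma single_mem_pi {S : Fin p → Submodule K V} (i : Fin p) {b : V} (hb : b ∈ S i) :
    Pi.single i b ∈ Submodule.pi Set.univ S := by
  intro j _
  by_cases h : j = i
  · subst h; rw [Pi.single_eq_same]; exact hb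
  · rw [Pi.single_eq_of_ne h]; exact Submodule.zero_mem _

/-- the radical of the (restricted) sum form on a product of submodules is the
product of the radicals -/
def radPiEquiv (B : LinearMap.BilinForm K V) (hsymm : ∀ x y, B x y = B y x)
    (S : Fin p → Submodule K V) :
    ↥(((sumForm B p).restrict (Submodule.pi Set.univ S)).orthogonal ⊤)
      ≃ ∀ i, ↥(S i ⊓ B.orthogonal (S i)) where
  toFun x i := ⟨x.1.1 i, ⟨x.1.2 i (Set.mem_univ i), by
    intro b hb
    have hx : sumForm B p (Pi.single i b) x.1.1 = 0 :=
      x.2 ⟨Pi.single i b, single_mem_pi i hb⟩ Submodule.mem_top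
    rw [sumForm_single] at hx
    exact hx⟩⟩
  invFun f := ⟨⟨fun i => (f i).1, fun i _ => (f i).2.1⟩, by
    intro y _
    show sumForm B p y.1 (fun i => (f i).1) = 0
    rw [sumForm_apply]
    refine Finset.sum_eq_zero fun i _ => ?_
    exact (f i).2.2 (y.1 i) (y.2 i (Set.mem_univ i))⟩
  left_inv x := Subtype.ext (Subtype.ext rfl)
  right_inv f := funext fun i => Subtype.ext rfl

lemma card_rad_pi (B : LinearMap.BilinForm K V) (hsymm : ∀ x y, B x y = B y x)
    (S : Fin p → Submodule K V) :
    Nat.card ↥(((sumForm B p).restrict (Submodule.pi Set.univ S)).orthogonal ⊤)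
      = ∏ i, Nat.card ↥(S i ⊓ B.orthogonal (S i)) := by
  rw [Nat.card_congr (radPiEquiv B hsymm S), Nat.card_pi]

end PiHelpers

section CdimHelper
variable {n : ℕ}

lemma le_cdim {M K : Subgroup (PhaselessPauli n)} (hK : K ≤ M)
    (hcomm : IsCommutingSubgroup K) : Nat.log 2 (Nat.card K) ≤ cdim M := by
  apply le_csSup
  · refine ⟨Nat.log 2 (Nat.card (PhaselessPauli n)), ?_⟩
    rintro d ⟨K', _, rfl⟩
    exact Nat.log_mono_right K'.card_le_card_group
  · exact ⟨K, ⟨hK, hcomm⟩, rfl⟩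

lemma two_pow_inj {a b : ℕ} (h : (2:ℕ) ^ a = 2 ^ b) : a = b :=
  Nat.pow_right_injective (le_refl 2) h

end CdimHelper
set_option maxHeartbeats 1000000 in
set_option synthInstance.maxHeartbeats 100000 in
/-- for a stabilizer group `G ≤ P_n` (abelian, `-I ∉ G`) and a disjoint
covering `A_1, …, A_p` of `[n]`, `log₂|G| ≤ Σ_i c(ρ_{A_i}(G))`. -/
theorem stabilizer_dim_le_sum_cdim (n p : ℕ) (G : Subgroup (MatU n))
    (hG : ∀ g ∈ G, IsPauli ((g : MatU n) : QMat n))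
    (hab : ∀ a ∈ G, ∀ b ∈ G, a * b = b * a)
    (hneg : (-1 : MatU n) ∉ G)
    (A : Fin p → Finset (Fin n))
    (hdisj : ∀ i j, i ≠ j → Disjoint (A i) (A j))
    (hcover : ∀ x : Fin n, ∃ i, x ∈ A i) :
    Nat.log 2 (Nat.card G) ≤
      ∑ i, cdim (Subgroup.closure
        ((fun u : MatU n => localView (A i) (u : QMat n)) '' (G : Set (MatU n)))) := by
  classical
  letI : CommGroup ↥G :=
    { (inferInstance : Group ↥G) with
      mul_comm := fun a b => Subtype.ext (hab a.1 a.2 b.1 b.2) }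
  haveI : Finite ↥G := by
    have hfin : {P : QMat n | IsPauli P}.Finite :=
      Set.Finite.subset (Set.finite_range _) isPauli_sub_range
    haveI := hfin.to_subtype
    refine Finite.of_injective
      (fun g : ↥G => (⟨((g : ↥G).1 : QMat n), hG g.1 g.2⟩ : {P : QMat n | IsPauli P})) ?_
    intro u v huv
    apply Subtype.ext; apply Units.ext
    exact congrArg Subtype.val huv
  have hsq : ∀ g : ↥G, g * g = 1 := by
    intro g
    rcases (hG g.1 g.2).sq_pm with h | h
    · apply Subtype.ext; apply Units.ext; exact h
    · exfalso
      apply hneg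
      have hunit : (g.1 * g.1 : MatU n) = -1 := by
        apply Units.ext
        rw [Units.val_mul, Units.val_neg, Units.val_one]
        exact h
      exact hunit ▸ (mul_mem g.2 g.2)
  letI : Module (ZMod 2) (Additive ↥G) :=
    AddCommGroup.zmodModule (by
      intro x
      show (2:ℕ) • x = 0
      rw [two_nsmul]
      exact hsq (Additive.toMul x))
  -- the combined local-view map, as a ZMod 2-linear map
  have hφmul : ∀ g h : ↥G,
      (fun i => Additive.ofMul (localView (A i) ((g * h : ↥G).1 : QMat n)))
      = (fun i => Additive.ofMul (localView (A i) ((g : ↥G).1 : QMat n)))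
        + (fun i => Additive.ofMul (localView (A i) ((h : ↥G).1 : QMat n))) := by
    intro g h
    funext i
    show Additive.ofMul (localView (A i) ((g.1 * h.1 : MatU n) : QMat n)) = _
    rw [Units.val_mul, localView_mul (hG g.1 g.2) (hG h.1 h.2)]
    rfl
  set Φadd : Additive ↥G →+ (Fin p → MM n) :=
    AddMonoidHom.mk'
      (fun g => fun i => Additive.ofMul (localView (A i) ((Additive.toMul g : ↥G).1 : QMat n)))
      (fun g h => hφmul (Additive.toMul g) (Additive.toMul h)) with hΦadd
  set Φ : Additive ↥G →ₗ[ZMod 2] (Fin p → MM n) :=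
    AddMonoidHom.toZModLinearMap 2 Φadd with hΦdef
  have hΦapply : ∀ (g : Additive ↥G) (i : Fin p),
      Φ g i = Additive.ofMul (localView (A i) ((Additive.toMul g : ↥G).1 : QMat n)) :=
    fun g i => rfl
  -- injectivity of Φ
  have hΦinj : Function.Injective Φ := by
    rw [← LinearMap.ker_eq_bot, LinearMap.ker_eq_bot']
    intro g hg0
    have hfac : ∀ j, pauliFactor ((Additive.toMul g : ↥G).1 : QMat n) j = 1 := by
      intro j
      obtain ⟨i, hi⟩ := hcover j
      have hli : localView (A i) ((Additive.toMul g : ↥G).1 : QMat n) = 1 := by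
        have h1 := congr_fun hg0 i
        rw [hΦapply] at h1
        exact Additive.ofMul.injective (h1.trans rfl)
      exact localView_one_factor hli j hi
    obtain ⟨a, ha⟩ := pauliFactor_spec (hG _ (Additive.toMul g).2)
    have hone : pauliFactor ((Additive.toMul g : ↥G).1 : QMat n) = fun _ => 1 := funext hfac
    rw [hone, tensorn_one] at ha
    have hsqm : ((Additive.toMul g : ↥G).1 : QMat n) * ((Additive.toMul g : ↥G).1 : QMat n)
        = 1 := by
      have h2 := hsq (Additive.toMul g)
      exact congrArg (fun z : ↥G => ((z : ↥G).1 : QMat n)) h2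
    rw [ha, Matrix.smul_mul, Matrix.mul_smul, smul_smul, one_mul, ← pow_add] at hsqm
    obtain ⟨m, hmlt⟩ := a
    have hI : Complex.I ^ (m + m) = 1 := smul_one_eq_one hsqm
    have hI2 : Complex.I ^ (2:ℕ) = -1 := by norm_num [pow_two, Complex.I_mul_I]
    interval_cases m
    · -- m = 0 : g = 1
      show g = 0
      have : Additive.toMul g = (1 : ↥G) := by
        apply Subtype.ext; apply Units.ext
        rw [show ((1 : ↥G).1 : QMat n) = 1 from rfl]
        rw [ha]; norm_num
      exact this
    · exfalso
      rw [show ((1:ℕ) + 1) = 2 from rfl, hI2] at hI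
      norm_num [Complex.ext_iff] at hI
    · exfalso
      apply hneg
      have hval : ((Additive.toMul g : ↥G).1 : QMat n) = ((-1 : MatU n) : QMat n) := by
        rw [ha, Units.val_neg, Units.val_one]
        norm_num [hI2]
      have : ((Additive.toMul g : ↥G) : MatU n) = (-1 : MatU n) := Units.ext hval
      exact this ▸ (Additive.toMul g).2
    · exfalso
      rw [show ((3:ℕ) + 3) = 6 from rfl, show (6:ℕ) = 2 + 4 from rfl, pow_add, hI2,
        I_pow_four, neg_one_mul] at hI
      norm_num [Complex.ext_iff] at hI
  -- submodules
  set Wsub : Fin p → Submodule (ZMod 2) (MM n) :=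
    fun i => LinearMap.range ((LinearMap.proj i).comp Φ) with hWsub
  set NN : Submodule (ZMod 2) (Fin p → MM n) := Submodule.pi Set.univ Wsub with hNN
  set V : Submodule (ZMod 2) (Fin p → MM n) := LinearMap.range Φ with hV
  have hVN : V ≤ NN := by
    rintro x ⟨g, rfl⟩
    intro i _
    exact ⟨g, rfl⟩
  -- isotropy of V
  have hViso : ∀ x ∈ V, ∀ y ∈ V, sumForm (betaLin n) p x y = 0 := by
    rintro x ⟨g, rfl⟩ y ⟨h, rfl⟩
    rw [sumForm_apply]
    have hcommM : ((Additive.toMul g : ↥G).1 : QMat n) * ((Additive.toMul h : ↥G).1 : QMat n)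
        = ((Additive.toMul h : ↥G).1 : QMat n) * ((Additive.toMul g : ↥G).1 : QMat n) := by
      have := hab _ (Additive.toMul g).2 _ (Additive.toMul h).2
      calc ((Additive.toMul g : ↥G).1 : QMat n) * ((Additive.toMul h : ↥G).1 : QMat n)
          = (((Additive.toMul g : ↥G) * (Additive.toMul h : ↥G) : MatU n) : QMat n) := rfl
        _ = (((Additive.toMul h : ↥G) * (Additive.toMul g : ↥G) : MatU n) : QMat n) := by
              rw [this]
        _ = _ := rfl
    have hterm : ∀ i, e2 (betaLin n (Φ g i) (Φ h i))
        = ∏ j ∈ A i, psign (pauliFactor ((Additive.toMul g : ↥G).1 : QMat n) j)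
            (pauliFactor ((Additive.toMul h : ↥G).1 : QMat n) j) := by
      intro i
      rw [hΦapply, hΦapply, betaLin_apply, e2_bq]
      exact Sgn_localView (A i) _ _
    have huniv : (Finset.univ : Finset (Fin n)) = Finset.univ.biUnion A := by
      ext j
      simp only [Finset.mem_univ, Finset.mem_biUnion, true_iff, true_and]
      exact hcover j
    have he : e2 (∑ i, betaLin n (Φ g i) (Φ h i)) = 1 := by
      rw [e2_sum, Finset.prod_congr rfl fun i _ => hterm i]
      rw [← Finset.prod_biUnion (fun i _ j _ hij => hdisj i j hij), ← huniv]
      rw [← psign_matrix_prod (hG _ (Additive.toMul g).2) (hG _ (Additive.toMul h).2)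
        (by
          have : ((Additive.toMul h : ↥G).1 : QMat n) * ((Additive.toMul g : ↥G).1 : QMat n)
              = (((Additive.toMul h : ↥G) * (Additive.toMul g : ↥G) : MatU n) : QMat n) := rfl
          rw [this]
          exact unit_ne_zero _)]
      exact psign_comm hcommM
    apply e2_inj
    rw [he, e2_zero]
  -- abstract symplectic bounds
  have hNalt : ((sumForm (betaLin n) p).restrict NN).IsAlt :=
    fun x => sumForm_isAlt betaLin_isAlt x.1
  have hVciso : SIsotropic ((sumForm (betaLin n) p).restrict NN)
      (Submodule.comap NN.subtype V) := by
    intro x hx y hy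
    exact hViso x.1 hx y.1 hy
  have hSineq := hVciso.finrank_le hNalt
  -- blocks
  set SB : Fin p → (Fin p → Submodule (ZMod 2) (MM n)) :=
    fun i => fun j => if j = i then Wsub i else ⊥ with hSB
  set NB : Fin p → Submodule (ZMod 2) (Fin p → MM n) :=
    fun i => Submodule.pi Set.univ (SB i) with hNB
  have hBalt : ∀ i, ((sumForm (betaLin n) p).restrict (NB i)).IsAlt :=
    fun i x => sumForm_isAlt betaLin_isAlt x.1
  choose U hUiso hUrank using fun i =>
    exists_max_isotropic ((sumForm (betaLin n) p).restrict (NB i)) (hBalt i)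
  -- dimension bookkeeping via cardinalities
  have hcard_bot : Nat.card ↥(⊥ : Submodule (ZMod 2) (MM n)) = 1 := by
    haveI : Unique ↥(⊥ : Submodule (ZMod 2) (MM n)) :=
      ⟨⟨⟨0, Submodule.zero_mem _⟩⟩, fun a => Subtype.ext ((Submodule.mem_bot _).mp a.2)⟩
    exact Nat.card_unique
  set dd : Fin p → ℕ := fun i => Module.finrank (ZMod 2) ↥(Wsub i) with hdd
  set rr : Fin p → ℕ :=
    fun i => Module.finrank (ZMod 2) ↥(Wsub i ⊓ (betaLin n).orthogonal (Wsub i)) with hrr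
  -- finrank NN = ∑ dd
  have hcardNN : Nat.card ↥NN = ∏ i, Nat.card ↥(Wsub i) := card_pi_submodule Wsub
  have hrankNN : Module.finrank (ZMod 2) ↥NN = ∑ i, dd i := by
    refine two_pow_inj ?_
    rw [← card2pow, hcardNN, ← Finset.prod_pow_eq_pow_sum]
    exact Finset.prod_congr rfl fun i _ => card2pow _
  -- finrank rad NN = ∑ rr
  have hradNN : Module.finrank (ZMod 2)
      ↥(((sumForm (betaLin n) p).restrict NN).orthogonal ⊤) = ∑ i, rr i := by
    refine two_pow_inj ?_
    rw [← card2pow, card_rad_pi (betaLin n) betaLin_symm Wsub, ← Finset.prod_pow_eq_pow_sum]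
    exact Finset.prod_congr rfl fun i _ => card2pow _
  -- block dimensions
  have hcardSB : ∀ i j, Nat.card ↥(SB i j) = if j = i then Nat.card ↥(Wsub i) else 1 := by
    intro i j
    simp only [hSB]
    by_cases h : j = i
    · rw [if_pos h, if_pos h]
    · rw [if_neg h, if_neg h]; exact hcard_bot
  have hrankNB : ∀ i, Module.finrank (ZMod 2) ↥(NB i) = dd i := by
    intro i
    refine two_pow_inj ?_
    rw [← card2pow, hNB]
    rw [card_pi_submodule (SB i), Finset.prod_congr rfl fun j _ => hcardSB i j,
      Finset.prod_ite_eq' Finset.univ i (fun _ => Nat.card ↥(Wsub i)),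
      if_pos (Finset.mem_univ i), card2pow]
  have hcardRB : ∀ i j, Nat.card ↥(SB i j ⊓ (betaLin n).orthogonal (SB i j))
      = if j = i then Nat.card ↥(Wsub i ⊓ (betaLin n).orthogonal (Wsub i)) else 1 := by
    intro i j
    simp only [hSB]
    by_cases h : j = i
    · rw [if_pos h, if_pos h]
    · rw [if_neg h, if_neg h, bot_inf_eq]; exact hcard_bot
  have hradNB : ∀ i, Module.finrank (ZMod 2)
      ↥(((sumForm (betaLin n) p).restrict (NB i)).orthogonal ⊤) = rr i := by
    intro i
    refine two_pow_inj ?_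
    rw [← card2pow, hNB, card_rad_pi (betaLin n) betaLin_symm (SB i),
      Finset.prod_congr rfl fun j _ => hcardRB i j,
      Finset.prod_ite_eq' Finset.univ i
        (fun _ => Nat.card ↥(Wsub i ⊓ (betaLin n).orthogonal (Wsub i))),
      if_pos (Finset.mem_univ i), card2pow]
  -- LHS equals finrank V
  have hcardG : Nat.card ↥G = Nat.card ↥V := by
    rw [Nat.card_congr (Additive.ofMul : ↥G ≃ Additive ↥G),
      Nat.card_congr (LinearEquiv.ofInjective Φ hΦinj).toEquiv]
  have hlogG : Nat.log 2 (Nat.card ↥G) = Module.finrank (ZMod 2) ↥V := by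
    rw [hcardG, card2pow, Nat.log_pow one_lt_two]
  -- main chain
  have hVrank : Module.finrank (ZMod 2) ↥(Submodule.comap NN.subtype V)
      = Module.finrank (ZMod 2) ↥V :=
    LinearEquiv.finrank_eq (Submodule.comapSubtypeEquivOfLe hVN)
  have hmain : 2 * Module.finrank (ZMod 2) ↥V ≤ ∑ i, (dd i + rr i) := by
    rw [← hVrank]
    calc 2 * Module.finrank (ZMod 2) ↥(Submodule.comap NN.subtype V)
        ≤ Module.finrank (ZMod 2) ↥NN + Module.finrank (ZMod 2)
          ↥(((sumForm (betaLin n) p).restrict NN).orthogonal ⊤) := hSineq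
      _ = ∑ i, dd i + ∑ i, rr i := by rw [hrankNN, hradNN]
      _ = ∑ i, (dd i + rr i) := (Finset.sum_add_distrib).symm
  have hsumU : ∑ i, (dd i + rr i) = 2 * ∑ i, Module.finrank (ZMod 2) ↥(U i) := by
    rw [Finset.mul_sum]
    exact Finset.sum_congr rfl fun i _ => by rw [hUrank i, hrankNB i, hradNB i]
  have hVle : Module.finrank (ZMod 2) ↥V ≤ ∑ i, Module.finrank (ZMod 2) ↥(U i) := by
    have := hmain.trans_eq hsumU
    omega
  -- build commuting subgroups from the U i
  have hfinal : ∀ i, Module.finrank (ZMod 2) ↥(U i) ≤ cdim (Subgroup.closure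
      ((fun u : MatU n => localView (A i) (u : QMat n)) '' (G : Set (MatU n)))) := by
    intro i
    set projmap : ↥(NB i) →ₗ[ZMod 2] MM n := (LinearMap.proj i).comp (NB i).subtype
      with hprojmap
    have hprojinj : Function.Injective projmap := by
      intro x y hxy
      apply Subtype.ext
      funext j
      by_cases hj : j = i
      · subst hj; exact hxy
      · have hx0 : x.1 j ∈ (⊥ : Submodule (ZMod 2) (MM n)) := by
          have := x.2 j (Set.mem_univ j)
          simp only [hSB] at this
          rwa [if_neg hj] at this
        have hy0 : y.1 j ∈ (⊥ : Submodule (ZMod 2) (MM n)) := by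
          have := y.2 j (Set.mem_univ j)
          simp only [hSB] at this
          rwa [if_neg hj] at this
        rw [Submodule.mem_bot] at hx0 hy0
        rw [hx0, hy0]
    set Umap : Submodule (ZMod 2) (MM n) := Submodule.map projmap (U i) with hUmap
    set KK : Subgroup (PhaselessPauli n) := AddSubgroup.toSubgroup' (Umap.toAddSubgroup)
      with hKK
    have hmemKK : ∀ x : PhaselessPauli n, x ∈ KK ↔ Additive.ofMul x ∈ Umap := fun x => Iff.rfl
    have hcardKK : Nat.card ↥KK = Nat.card ↥(U i) := by
      have e1 : ↥KK ≃ ↥Umap :=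
        Equiv.subtypeEquiv (Additive.ofMul : PhaselessPauli n ≃ MM n) (fun x => hmemKK x)
      rw [Nat.card_congr e1,
        Nat.card_congr (Submodule.equivMapOfInjective projmap hprojinj (U i)).toEquiv.symm]
    -- K ≤ closure
    have hKle : KK ≤ Subgroup.closure
        ((fun u : MatU n => localView (A i) (u : QMat n)) '' (G : Set (MatU n))) := by
      intro x hx
      rw [hmemKK] at hx
      obtain ⟨u, hu, hux⟩ := hx
      have humem : u.1 i ∈ Wsub i := by
        simpa only [hSB, ↓reduceIte, SetLike.mem_coe] using u.2 i (Set.mem_univ i)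
      obtain ⟨g, hg⟩ := humem
      apply Subgroup.subset_closure
      refine ⟨((Additive.toMul g : ↥G) : MatU n), (Additive.toMul g).2, ?_⟩
      have hx2 : Additive.ofMul x = Φ g i := by
        have h5 : projmap u = u.1 i := rfl
        rw [← hux, h5, ← hg]
        rfl
      rw [hΦapply] at hx2
      exact (Additive.ofMul.injective hx2).symm
    -- commuting
    have hKcomm : IsCommutingSubgroup KK := by
      intro x hx y hy
      rw [hmemKK] at hx hy
      obtain ⟨u, hu, hux⟩ := hx
      obtain ⟨v, hv, hvy⟩ := hy
      apply bq_comm0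
      have hiso := hUiso i u hu v hv
      have hiso2 : ∑ j, betaLin n (u.1 j) (v.1 j) = 0 := by
        have : sumForm (betaLin n) p u.1 v.1 = 0 := hiso
        rwa [sumForm_apply] at this
      rw [Finset.sum_eq_single i] at hiso2
      · have hux' : u.1 i = Additive.ofMul x := hux
        have hvy' : v.1 i = Additive.ofMul y := hvy
        rw [hux', hvy', betaLin_apply] at hiso2
        exact hiso2
      · intro j _ hj
        have hu0 : u.1 j ∈ (⊥ : Submodule (ZMod 2) (MM n)) := by
          have := u.2 j (Set.mem_univ j)
          simp only [hSB] at this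
          rwa [if_neg hj] at this
        rw [Submodule.mem_bot] at hu0
        rw [hu0, LinearMap.map_zero₂]
      · intro hmm; exact absurd (Finset.mem_univ i) hmm
    have hdim : Module.finrank (ZMod 2) ↥(U i) = Nat.log 2 (Nat.card ↥KK) := by
      rw [hcardKK, card2pow, Nat.log_pow one_lt_two]
    rw [hdim]
    exact le_cdim hKle hKcomm
  calc Nat.log 2 (Nat.card ↥G) = Module.finrank (ZMod 2) ↥V := hlogG
    _ ≤ ∑ i, Module.finrank (ZMod 2) ↥(U i) := hVle
    _ ≤ _ := Finset.sum_le_sum fun i _ => hfinal i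
end
end

section
/- Let W ⊆ F_2^{2n} be an isotropic subspace with respect to the standard symplectic form ω, and let A_1, …, A_p be pairwise disjoint subsets of [n] whose union is [n]. Then there exist subspaces W_1, …, W_p ⊆ W such that for each i the subspace ρ_{A_i}(W_i) is a maximal isotropic subspace of ρ_{A_i}(W) (isotropic for ω and not strictly contained in any isotropic subspace of ρ_{A_i}(W)), and dim W ≤ Σ_{i=1}^p dim ρ_{A_i}(W_i). -/
open Matrix

noncomputable section

/-- `F₂^{2n}`, presented as pairs `(x₁, x₂)` of vectors in `F₂^n`. -/
abbrev Vn (n : ℕ) := (Fin n → ZMod 2) × (Fin n → ZMod 2)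

/-- The standard symplectic form on `F₂^{2n}`: `ω(x,y) = x₁ᵀy₂ + x₂ᵀy₁`. -/
def sympOmega (n : ℕ) (x y : Vn n) : ZMod 2 :=
  (∑ i, x.1 i * y.2 i) + ∑ i, x.2 i * y.1 i

/-- The projection `ρ_A`, zeroing out every coordinate with index outside
`A ∪ {n + a : a ∈ A}` and leaving the rest unchanged. -/
def maskLin {n : ℕ} (A : Finset (Fin n)) : Vn n →ₗ[ZMod 2] Vn n where
  toFun x := (fun j => if j ∈ A then x.1 j else 0, fun j => if j ∈ A then x.2 j else 0)
  map_add' x y := by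
    refine Prod.ext ?_ ?_ <;> funext j <;> by_cases h : j ∈ A <;> simp [h]
  map_smul' c x := by
    refine Prod.ext ?_ ?_ <;> funext j <;> by_cases h : j ∈ A <;> simp [h]


open Module

section Abstract

variable {K V : Type*} [Field K] [AddCommGroup V] [Module K V]

/-- Key dimension lemma: an isotropic subspace has dimension at most that of a
"perp-closed within `V₀`" isotropic subspace. -/
lemma finrank_le_of_perp [FiniteDimensional K V]
    (B : V →ₗ[K] V →ₗ[K] K) (V₀ L M : Submodule K V)
    (hLle : L ≤ V₀)
    (hL : ∀ x ∈ L, ∀ y ∈ L, B x y = 0)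
    (hMiso : ∀ x ∈ M, ∀ y ∈ M, B x y = 0)
    (hMmax : ∀ v ∈ V₀, (∀ m ∈ M, B v m = 0) → v ∈ M) :
    finrank K L ≤ finrank K M := by
  classical
  set g : ↥L →ₗ[K] (↥M →ₗ[K] K) := (B.domRestrict L).compl₂ M.subtype with hg
  have hker : LinearMap.ker g = M.comap L.subtype := by
    ext l
    constructor
    · intro hl
      have : ∀ m ∈ M, B (l : V) m = 0 := by
        intro m hm
        have := congrArg (fun φ => φ ⟨m, hm⟩) (LinearMap.mem_ker.mp hl)
        simpa [hg] using this
      exact hMmax _ (hLle l.2) this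
    · intro hl
      apply LinearMap.mem_ker.mpr
      ext m
      simpa [hg] using hMiso _ hl _ m.2
  have hrange : LinearMap.range g ≤ (L.comap M.subtype).dualAnnihilator := by
    rintro φ ⟨l, rfl⟩
    rw [Submodule.mem_dualAnnihilator]
    intro m hm
    simpa [hg] using hL _ l.2 _ hm
  have h1 : finrank K (LinearMap.range g) + finrank K (LinearMap.ker g) = finrank K L :=
    LinearMap.finrank_range_add_finrank_ker g
  -- finrank of kernel equals finrank (L ⊓ M)
  have e1 : finrank K (LinearMap.ker g) = finrank K ↥(L ⊓ M) := by
    rw [hker]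
    have : M.comap L.subtype = (L ⊓ M).comap L.subtype := by
      ext x; simp [x.2]
    rw [this]
    exact (Submodule.comapSubtypeEquivOfLe (inf_le_left : L ⊓ M ≤ L)).finrank_eq
  have e2 : finrank K ↥(L.comap M.subtype) = finrank K ↥(L ⊓ M) := by
    have : L.comap M.subtype = (M ⊓ L).comap M.subtype := by
      ext x; simp [x.2]
    rw [this, inf_comm]
    exact (Submodule.comapSubtypeEquivOfLe
      (by rw [inf_comm]; exact inf_le_left : L ⊓ M ≤ M)).finrank_eq
  have h2 : finrank K ↥(L.comap M.subtype) +
      finrank K ↥((L.comap M.subtype).dualAnnihilator) = finrank K ↥M := by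
    have q : finrank K (↥M ⧸ (L.comap M.subtype)) =
        finrank K ↥((L.comap M.subtype).dualAnnihilator) :=
      (Subspace.quotEquivAnnihilator (L.comap M.subtype)).finrank_eq
    have := Submodule.finrank_quotient_add_finrank (L.comap M.subtype)
    omega
  have h3 : finrank K (LinearMap.range g) ≤
      finrank K ↥((L.comap M.subtype).dualAnnihilator) :=
    Submodule.finrank_mono hrange
  omega

/-- Existence of a maximal ("perp-closed") isotropic subspace of `V₀`. -/
lemma exists_max_isotropic_s19 [FiniteDimensional K V] [Finite V]
    (B : V →ₗ[K] V →ₗ[K] K) (halt : ∀ v, B v v = 0) (hsymm : ∀ x y, B x y = B y x)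
    (V₀ : Submodule K V) :
    ∃ M : Submodule K V, M ≤ V₀ ∧ (∀ x ∈ M, ∀ y ∈ M, B x y = 0) ∧
      (∀ v ∈ V₀, (∀ m ∈ M, B v m = 0) → v ∈ M) := by
  classical
  haveI : Finite (Submodule K V) :=
    Finite.of_injective (fun M : Submodule K V => (M : Set V)) SetLike.coe_injective
  set s : Set (Submodule K V) := {M | M ≤ V₀ ∧ ∀ x ∈ M, ∀ y ∈ M, B x y = 0} with hs
  have hbot : (⊥ : Submodule K V) ∈ s := by
    constructor
    · exact bot_le
    · intro x hx y hy
      simp at hx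
      simp [hx]
  obtain ⟨M, hMs, hMmaxwrt⟩ := Set.Finite.exists_maximalFor
    (fun M : Submodule K V => finrank K M) s (Set.toFinite s) ⟨⊥, hbot⟩
  refine ⟨M, hMs.1, hMs.2, ?_⟩
  intro v hv hperp
  by_contra hvM
  set M' : Submodule K V := M ⊔ Submodule.span K {v} with hM'
  have hMM' : M < M' := by
    refine lt_of_le_of_ne le_sup_left ?_
    intro h
    apply hvM
    rw [h]
    exact Submodule.mem_sup_right (Submodule.mem_span_singleton_self v)
  have hM's : M' ∈ s := by
    constructor
    · exact sup_le hMs.1 ((Submodule.span_singleton_le_iff_mem v V₀).mpr hv)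
    · intro x hx y hy
      obtain ⟨mx, hmx, x', hx', rfl⟩ := Submodule.mem_sup.mp hx
      obtain ⟨my, hmy, y', hy', rfl⟩ := Submodule.mem_sup.mp hy
      obtain ⟨c, rfl⟩ := Submodule.mem_span_singleton.mp hx'
      obtain ⟨d, rfl⟩ := Submodule.mem_span_singleton.mp hy'
      have h1 : B mx my = 0 := hMs.2 _ hmx _ hmy
      have h2 : B v my = 0 := hperp _ hmy
      have h3 : B mx v = 0 := by rw [hsymm]; exact hperp _ hmx
      simp [map_add, _root_.map_smul, h1, h2, h3, halt]
  have hlt : finrank K M < finrank K M' := Submodule.finrank_lt_finrank_of_lt hMM'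
  exact absurd (hMmaxwrt hM's hlt.le) (not_le.mpr hlt)

end Abstract

section Concrete

open Module

variable {n : ℕ}

/-- `sympOmega` as a bundled bilinear map. -/
def sympB (n : ℕ) : Vn n →ₗ[ZMod 2] Vn n →ₗ[ZMod 2] ZMod 2 :=
  LinearMap.mk₂ (ZMod 2) (sympOmega n)
    (fun x x' y => by
      simp [sympOmega, add_mul, Finset.sum_add_distrib]; ring)
    (fun c x y => by
      simp [sympOmega, mul_assoc, Finset.mul_sum, mul_add])
    (fun x y y' => by
      simp [sympOmega, mul_add, Finset.sum_add_distrib]; ring)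
    (fun c x y => by
      simp [sympOmega, Finset.mul_sum, mul_add, mul_left_comm])

@[simp] lemma sympB_apply (x y : Vn n) : sympB n x y = sympOmega n x y := rfl

lemma sympOmega_symm (x y : Vn n) : sympOmega n x y = sympOmega n y x := by
  simp only [sympOmega]
  rw [add_comm]
  congr 1 <;> exact Finset.sum_congr rfl fun i _ => mul_comm _ _

lemma sympOmega_self (x : Vn n) : sympOmega n x x = 0 := by
  simp only [sympOmega]
  have : ∑ i, x.2 i * x.1 i = ∑ i, x.1 i * x.2 i :=
    Finset.sum_congr rfl fun i _ => mul_comm _ _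
  rw [this, CharTwo.add_self_eq_zero]

lemma sympOmega_mask (A : Finset (Fin n)) (x y : Vn n) :
    sympOmega n (maskLin A x) (maskLin A y) =
      ∑ j, (if j ∈ A then x.1 j * y.2 j + x.2 j * y.1 j else 0) := by
  simp only [sympOmega, maskLin, LinearMap.coe_mk, AddHom.coe_mk]
  rw [← Finset.sum_add_distrib]
  refine Finset.sum_congr rfl fun j _ => ?_
  by_cases h : j ∈ A <;> simp [h]

/-- Decomposition of the form along a partition. -/
lemma sympOmega_decomp {p : ℕ} (A : Fin p → Finset (Fin n))
    (hdisj : ∀ i j, i ≠ j → Disjoint (A i) (A j))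
    (hcover : ∀ x : Fin n, ∃ i, x ∈ A i) (x y : Vn n) :
    ∑ i, sympOmega n (maskLin (A i) x) (maskLin (A i) y) = sympOmega n x y := by
  simp only [sympOmega_mask]
  rw [Finset.sum_comm]
  have : ∀ j : Fin n,
      (∑ i, if j ∈ A i then x.1 j * y.2 j + x.2 j * y.1 j else 0)
        = x.1 j * y.2 j + x.2 j * y.1 j := by
    intro j
    obtain ⟨i₀, hi₀⟩ := hcover j
    rw [Finset.sum_eq_single i₀]
    · simp [hi₀]
    · intro b _ hb
      have : j ∉ A b := fun hjb => (Finset.disjoint_left.mp (hdisj b i₀ hb)) hjb hi₀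
      simp [this]
    · simp
  simp only [this, sympOmega, Finset.sum_add_distrib]

/-- The big diagonal form on `(Fin p → Vn n)`. -/
def bigB (n p : ℕ) : (Fin p → Vn n) →ₗ[ZMod 2] (Fin p → Vn n) →ₗ[ZMod 2] ZMod 2 :=
  LinearMap.mk₂ (ZMod 2) (fun f g => ∑ i, sympB n (f i) (g i))
    (fun f f' g => by
      simp only [Pi.add_apply, map_add, LinearMap.add_apply, Finset.sum_add_distrib])
    (fun c f g => by
      simp only [Pi.smul_apply, _root_.map_smul, LinearMap.smul_apply, smul_eq_mul,
        Finset.mul_sum])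
    (fun f g g' => by
      simp only [Pi.add_apply, map_add, Finset.sum_add_distrib])
    (fun c f g => by
      simp only [Pi.smul_apply, _root_.map_smul, smul_eq_mul, Finset.mul_sum])

@[simp] lemma bigB_apply {p : ℕ} (f g : Fin p → Vn n) :
    bigB n p f g = ∑ i, sympOmega n (f i) (g i) := rfl

lemma bigB_self {p : ℕ} (f : Fin p → Vn n) : bigB n p f f = 0 := by
  simp [sympOmega_self]

lemma bigB_symm {p : ℕ} (f g : Fin p → Vn n) : bigB n p f g = bigB n p g f := by
  simp only [bigB_apply]
  exact Finset.sum_congr rfl fun i _ => sympOmega_symm _ _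

lemma maskPi_injective {p : ℕ} (A : Fin p → Finset (Fin n))
    (hcover : ∀ x : Fin n, ∃ i, x ∈ A i) :
    Function.Injective (LinearMap.pi (fun i => maskLin (A i)) : Vn n →ₗ[ZMod 2] _) := by
  rw [← LinearMap.ker_eq_bot]
  ext x
  simp only [LinearMap.mem_ker, Submodule.mem_bot]
  constructor
  · intro h
    have h' : ∀ i, maskLin (A i) x = 0 := fun i => congrFun h i
    have e1 : ∀ j, x.1 j = 0 := by
      intro j
      obtain ⟨i, hi⟩ := hcover j
      have := congrFun (congrArg Prod.fst (h' i)) j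
      simpa [maskLin, hi] using this
    have e2 : ∀ j, x.2 j = 0 := by
      intro j
      obtain ⟨i, hi⟩ := hcover j
      have := congrFun (congrArg Prod.snd (h' i)) j
      simpa [maskLin, hi] using this
    exact Prod.ext (funext e1) (funext e2)
  · rintro rfl; simp

/-- finrank of a pi submodule. -/
lemma finrank_pi_submodule {p : ℕ} (M : Fin p → Submodule (ZMod 2) (Vn n)) :
    finrank (ZMod 2) ↥(Submodule.pi Set.univ M) = ∑ i, finrank (ZMod 2) ↥(M i) := by
  have e : ↥(Submodule.pi Set.univ M) ≃ₗ[ZMod 2] ((i : Fin p) → ↥(M i)) :=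
    { toFun := fun f i => ⟨f.1 i, Submodule.mem_pi.mp f.2 i (Set.mem_univ i)⟩
      map_add' := fun f g => rfl
      map_smul' := fun c f => rfl
      invFun := fun g => ⟨fun i => g i, fun i _ => (g i).2⟩
      left_inv := fun f => rfl
      right_inv := fun g => rfl }
  rw [e.finrank_eq, Module.finrank_pi_fintype]

end Concrete

/-- for an isotropic `W ⊆ F₂^{2n}` and a disjoint covering
`A_1, …, A_p` of `[n]`, there are subspaces `W_i ⊆ W` whose local views `ρ_{A_i}(W_i)`
are maximal isotropic subspaces of `ρ_{A_i}(W)`, with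
`dim W ≤ Σ_i dim ρ_{A_i}(W_i)`. -/
theorem isotropic_dim_le_sum_local_views (n p : ℕ) (W : Submodule (ZMod 2) (Vn n))
    (hW : ∀ u ∈ W, ∀ v ∈ W, sympOmega n u v = 0)
    (A : Fin p → Finset (Fin n))
    (hdisj : ∀ i j, i ≠ j → Disjoint (A i) (A j))
    (hcover : ∀ x : Fin n, ∃ i, x ∈ A i) :
    ∃ Ws : Fin p → Submodule (ZMod 2) (Vn n),
      (∀ i, Ws i ≤ W) ∧
      (∀ i,
        (∀ u ∈ (Ws i).map (maskLin (A i)), ∀ v ∈ (Ws i).map (maskLin (A i)),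
          sympOmega n u v = 0) ∧
        (Ws i).map (maskLin (A i)) ≤ W.map (maskLin (A i)) ∧
        (∀ U : Submodule (ZMod 2) (Vn n), U ≤ W.map (maskLin (A i)) →
          (∀ u ∈ U, ∀ v ∈ U, sympOmega n u v = 0) →
          (Ws i).map (maskLin (A i)) ≤ U → U = (Ws i).map (maskLin (A i)))) ∧
      Module.finrank (ZMod 2) ↥W ≤
        ∑ i, Module.finrank (ZMod 2) ↥((Ws i).map (maskLin (A i))) := by
  classical
  have symm : ∀ x y : Vn n, sympB n x y = sympB n y x := fun x y => sympOmega_symm x y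
  have alt : ∀ x : Vn n, sympB n x x = 0 := fun x => sympOmega_self x
  choose M hMle hMiso hMmax using fun i =>
    exists_max_isotropic_s19 (sympB n) alt symm (W.map (maskLin (A i)))
  refine ⟨fun i => W ⊓ (M i).comap (maskLin (A i)), fun i => inf_le_left, ?_, ?_⟩
  case refine_1 =>
    intro i
    have hmap : (W ⊓ (M i).comap (maskLin (A i))).map (maskLin (A i)) = M i := by
      apply le_antisymm
      · rintro x ⟨w, hw, rfl⟩
        exact hw.2
      · intro m hm
        obtain ⟨w, hw, rfl⟩ := hMle i hm
        exact ⟨w, ⟨hw, hm⟩, rfl⟩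
    rw [hmap]
    refine ⟨fun u hu v hv => hMiso i u hu v hv, hMle i, ?_⟩
    intro U hUle hUiso hMU
    refine le_antisymm (fun u hu => ?_) hMU
    exact hMmax i u (hUle hu) (fun m hm => hUiso u hu m (hMU hm))
  case refine_2 =>
    have hmap : ∀ i, (W ⊓ (M i).comap (maskLin (A i))).map (maskLin (A i)) = M i := by
      intro i
      apply le_antisymm
      · rintro x ⟨w, hw, rfl⟩
        exact hw.2
      · intro m hm
        obtain ⟨w, hw, rfl⟩ := hMle i hm
        exact ⟨w, ⟨hw, hm⟩, rfl⟩
    show finrank (ZMod 2) ↥W ≤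
      ∑ i, finrank (ZMod 2) ↥((W ⊓ (M i).comap (maskLin (A i))).map (maskLin (A i)))
    have hsum : ∑ i, finrank (ZMod 2)
        ↥((W ⊓ (M i).comap (maskLin (A i))).map (maskLin (A i))) =
        ∑ i, finrank (ZMod 2) ↥(M i) :=
      Finset.sum_congr rfl fun i _ => by rw [hmap i]
    rw [hsum]
    set Φ : Vn n →ₗ[ZMod 2] (Fin p → Vn n) := LinearMap.pi (fun i => maskLin (A i)) with hΦ
    have hinj := maskPi_injective A hcover
    have h1 : finrank (ZMod 2) ↥W = finrank (ZMod 2) ↥(W.map Φ) :=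
      (Submodule.equivMapOfInjective Φ hinj W).finrank_eq
    have key : finrank (ZMod 2) ↥(W.map Φ) ≤
        finrank (ZMod 2) ↥(Submodule.pi Set.univ M) := by
      apply finrank_le_of_perp (bigB n p)
        (Submodule.pi Set.univ (fun i => W.map (maskLin (A i))))
      · rintro x ⟨w, hw, rfl⟩
        rw [Submodule.mem_pi]
        intro i _
        exact ⟨w, hw, rfl⟩
      · rintro x ⟨u, hu, rfl⟩ y ⟨v, hv, rfl⟩
        show bigB n p (Φ u) (Φ v) = 0
        rw [bigB_apply]
        simp only [hΦ, LinearMap.pi_apply]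
        rw [sympOmega_decomp A hdisj hcover]
        exact hW u hu v hv
      · intro f hf g hg
        rw [bigB_apply]
        apply Finset.sum_eq_zero
        intro i _
        exact hMiso i _ (Submodule.mem_pi.mp hf i (Set.mem_univ i)) _
          (Submodule.mem_pi.mp hg i (Set.mem_univ i))
      · intro v hv hperp
        rw [Submodule.mem_pi]
        intro i _
        apply hMmax i (v i) (Submodule.mem_pi.mp hv i (Set.mem_univ i))
        intro m hm
        have hsingle : Pi.single i m ∈ Submodule.pi Set.univ M := by
          rw [Submodule.mem_pi]
          intro j _
          by_cases h : j = i
          · subst h; simpa using hm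
          · rw [Pi.single_eq_of_ne h]; exact (M j).zero_mem
        have hz := hperp _ hsingle
        rw [bigB_apply, Finset.sum_eq_single i] at hz
        · simpa using hz
        · intro b _ hb
          rw [Pi.single_eq_of_ne hb]
          simp [sympOmega]
        · simp
    have h2 : finrank (ZMod 2) ↥(Submodule.pi Set.univ M) =
        ∑ i, finrank (ZMod 2) ↥(M i) := finrank_pi_submodule M
    omega
end
end
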